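/- arXiv:1502.01288 — 6 statements merged into one kernel-verified Lean document; each statement's English description precedes it below -/
import Mathlib

section
/- Let ℓ be an odd prime and let g ∈ GL₂(F_ℓ) have trace 0. Then g lies in a conjugate of N_ns, the normalizer of the nonsplit Cartan subgroup. -/
open Matrix

abbrev GL2 (ℓ : ℕ) : Type := GL (Fin 2) (ZMod ℓ)

/-- The underlying matrix of an element of `GL₂(F_ℓ)`. -/
def mat {ℓ : ℕ} (g : GL2 ℓ) : Matrix (Fin 2) (Fin 2) (ZMod ℓ) := g

/-- `g` is a diagonal matrix. -/
def IsDiag {ℓ : ℕ} (g : GL2 ℓ) : Prop := mat g 0 1 = 0 ∧ mat g 1 0 = 0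

/-- `g` is an antidiagonal matrix. -/
def IsAnti {ℓ : ℕ} (g : GL2 ℓ) : Prop := mat g 0 0 = 0 ∧ mat g 1 1 = 0

/-- `g` is a scalar matrix. -/
def IsScalar {ℓ : ℕ} (g : GL2 ℓ) : Prop :=
  ∃ c : ZMod ℓ, mat g = c • (1 : Matrix (Fin 2) (Fin 2) (ZMod ℓ))

/-- Membership in the split Cartan subgroup `C_sp` (the diagonal matrices). -/
def InCsp {ℓ : ℕ} (g : GL2 ℓ) : Prop := IsDiag g

/-- Membership in the normalizer `N_sp` of the split Cartan (diagonal or antidiagonal). -/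
def InNsp {ℓ : ℕ} (g : GL2 ℓ) : Prop := IsDiag g ∨ IsAnti g

/-- Membership in the nonsplit Cartan `C_ns` w.r.t. the nonresidue `δ`:
matrices of the form `[[a, δb], [b, a]]`. -/
def InCns {ℓ : ℕ} (δ : ZMod ℓ) (g : GL2 ℓ) : Prop :=
  mat g 1 1 = mat g 0 0 ∧ mat g 0 1 = δ * mat g 1 0

/-- Membership in `N_ns \ C_ns` (as a matrix shape): `[[a, -δb], [b, -a]]`. -/
def InNnsAnti {ℓ : ℕ} (δ : ZMod ℓ) (g : GL2 ℓ) : Prop :=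
  mat g 1 1 = - mat g 0 0 ∧ mat g 0 1 = - (δ * mat g 1 0)

/-- Membership in the normalizer `N_ns` of the nonsplit Cartan. -/
def InNns {ℓ : ℕ} (δ : ZMod ℓ) (g : GL2 ℓ) : Prop := InCns δ g ∨ InNnsAnti δ g

/-- `PGL₂(F_ℓ)`: the quotient of `GL₂(F_ℓ)` by its center (the scalar matrices). -/
abbrev PGL2 (ℓ : ℕ) : Type := GL2 ℓ ⧸ Subgroup.center (GL2 ℓ)

/-- The natural projection `GL₂(F_ℓ) →* PGL₂(F_ℓ)`. -/
def toPGL (ℓ : ℕ) : GL2 ℓ →* PGL2 ℓ := QuotientGroup.mk' _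

/-- The image of a subgroup of `GL₂(F_ℓ)` in `PGL₂(F_ℓ)`. -/
def projImage {ℓ : ℕ} (G : Subgroup (GL2 ℓ)) : Subgroup (PGL2 ℓ) := G.map (toPGL ℓ)

/-- `H` is isomorphic to the alternating group `A₄`. -/
def IsA4 {ℓ : ℕ} (H : Subgroup (PGL2 ℓ)) : Prop := Nonempty (H ≃* alternatingGroup (Fin 4))

/-- `H` is isomorphic to the symmetric group `S₄`. -/
def IsS4 {ℓ : ℕ} (H : Subgroup (PGL2 ℓ)) : Prop := Nonempty (H ≃* Equiv.Perm (Fin 4))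

/-- `H` is isomorphic to the alternating group `A₅`. -/
def IsA5 {ℓ : ℕ} (H : Subgroup (PGL2 ℓ)) : Prop := Nonempty (H ≃* alternatingGroup (Fin 5))

/-- In a finite field `ZMod ℓ`, the product of two nonsquares is a square. -/
lemma aux_nonsq_mul {ℓ : ℕ} [Fact ℓ.Prime] {a b : ZMod ℓ} (ha : ¬ IsSquare a)
    (hb : ¬ IsSquare b) : IsSquare (a * b) := by
  have ha0 : a ≠ 0 := fun h => ha (h ▸ IsSquare.zero)
  have hb0 : b ≠ 0 := fun h => hb (h ▸ IsSquare.zero)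
  have h1 : quadraticChar (ZMod ℓ) a = -1 := quadraticChar_neg_one_iff_not_isSquare.mpr ha
  have h2 : quadraticChar (ZMod ℓ) b = -1 := quadraticChar_neg_one_iff_not_isSquare.mpr hb
  have : quadraticChar (ZMod ℓ) (a * b) = 1 := by rw [_root_.map_mul, h1, h2]; ring
  exact (quadraticChar_one_iff_isSquare (mul_ne_zero ha0 hb0)).mp this

/-- Companion-type conjugation step: if `M² = -d·1` and `v, Mv` is a basis, then
`M` is conjugate to the companion matrix `[[0,-d],[1,0]]` via `P = [v | Mv]`. -/
lemma aux_step {K : Type*} [Field K] (M : Matrix (Fin 2) (Fin 2) K) (d : K)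
    (hM2 : M * M = (-d) • (1 : Matrix (Fin 2) (Fin 2) K))
    (v : Fin 2 → K)
    (hv : v 0 * M.mulVec v 1 - M.mulVec v 0 * v 1 ≠ 0) :
    ∃ P : (Matrix (Fin 2) (Fin 2) K)ˣ,
      M * (P : Matrix (Fin 2) (Fin 2) K) =
        (P : Matrix (Fin 2) (Fin 2) K) * Matrix.of ![![0, -d], ![1, 0]] := by
  set w := M.mulVec v with hw
  set P : Matrix (Fin 2) (Fin 2) K := Matrix.of ![![v 0, w 0], ![v 1, w 1]] with hP
  have hdet : P.det ≠ 0 := by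
    rw [Matrix.det_fin_two]
    simpa [hP] using hv
  have hunit : IsUnit P := (Matrix.isUnit_iff_isUnit_det P).mpr (isUnit_iff_ne_zero.mpr hdet)
  refine ⟨hunit.unit, ?_⟩
  rw [IsUnit.unit_spec]
  have hw2 : M.mulVec w = fun i => -d * v i := by
    rw [hw, Matrix.mulVec_mulVec, hM2]
    funext i
    simp [Matrix.mulVec, dotProduct, Fin.sum_univ_two, Matrix.one_apply]
  have hw0 : M 0 0 * v 0 + M 0 1 * v 1 = w 0 := by
    simp [hw, Matrix.mulVec, dotProduct, Fin.sum_univ_two]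
  have hw1 : M 1 0 * v 0 + M 1 1 * v 1 = w 1 := by
    simp [hw, Matrix.mulVec, dotProduct, Fin.sum_univ_two]
  have hww0 : M 0 0 * w 0 + M 0 1 * w 1 = -d * v 0 := by
    have := congrFun hw2 0
    simpa [Matrix.mulVec, dotProduct, Fin.sum_univ_two] using this
  have hww1 : M 1 0 * w 0 + M 1 1 * w 1 = -d * v 1 := by
    have := congrFun hw2 1
    simpa [Matrix.mulVec, dotProduct, Fin.sum_univ_two] using this
  ext i j
  fin_cases i <;> fin_cases j <;>
    simp [hP, Matrix.mul_apply, Fin.sum_univ_two] <;>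
    [exact hw0; linear_combination hww0; exact hw1; linear_combination hww1]

/-- Assembly: if `g·P = P·C` and `N·Q = Q·C`, then `(QP⁻¹) g (QP⁻¹)⁻¹ = N`. -/
lemma aux_finish {K : Type*} [Field K] (g P Q : (Matrix (Fin 2) (Fin 2) K)ˣ)
    (N C : Matrix (Fin 2) (Fin 2) K)
    (hP : (g : Matrix (Fin 2) (Fin 2) K) * P = (P : Matrix (Fin 2) (Fin 2) K) * C)
    (hQ : N * (Q : Matrix (Fin 2) (Fin 2) K) = (Q : Matrix (Fin 2) (Fin 2) K) * C) :
    ((Q * P⁻¹ * g * (Q * P⁻¹)⁻¹ : (Matrix (Fin 2) (Fin 2) K)ˣ) :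
      Matrix (Fin 2) (Fin 2) K) = N := by
  have hinv : (Q * P⁻¹ * g * (Q * P⁻¹)⁻¹ : (Matrix (Fin 2) (Fin 2) K)ˣ)
      = Q * (P⁻¹ * g * P) * Q⁻¹ := by group
  rw [hinv]
  have hC : ((P⁻¹ : (Matrix (Fin 2) (Fin 2) K)ˣ) : Matrix (Fin 2) (Fin 2) K) *
      ((g : Matrix (Fin 2) (Fin 2) K) * P) = C := by
    rw [hP, ← mul_assoc, Units.inv_mul, one_mul]
  calc ((Q * (P⁻¹ * g * P) * Q⁻¹ : (Matrix (Fin 2) (Fin 2) K)ˣ) : Matrix (Fin 2) (Fin 2) K)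
      = (Q : Matrix (Fin 2) (Fin 2) K) *
        (((P⁻¹ : (Matrix (Fin 2) (Fin 2) K)ˣ) : Matrix (Fin 2) (Fin 2) K) *
          ((g : Matrix (Fin 2) (Fin 2) K) * P)) *
        ((Q⁻¹ : (Matrix (Fin 2) (Fin 2) K)ˣ) : Matrix (Fin 2) (Fin 2) K) := by
        simp [Units.val_mul, mul_assoc]
    _ = (Q : Matrix (Fin 2) (Fin 2) K) * C *
        ((Q⁻¹ : (Matrix (Fin 2) (Fin 2) K)ˣ) : Matrix (Fin 2) (Fin 2) K) := by rw [hC]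
    _ = N * ((Q : Matrix (Fin 2) (Fin 2) K) *
        ((Q⁻¹ : (Matrix (Fin 2) (Fin 2) K)ˣ) : Matrix (Fin 2) (Fin 2) K)) := by
        rw [← hQ, mul_assoc]
    _ = N := by rw [Units.mul_inv, mul_one]


/-- A trace-zero element of `GL₂(F_ℓ)` lies in a conjugate of the normalizer
of the nonsplit Cartan subgroup. -/
theorem trace_zero_mem_conj_normalizer_nonsplit
    {ℓ : ℕ} [Fact ℓ.Prime] (hℓ : ℓ ≠ 2) (δ : ZMod ℓ) (hδ : ¬ IsSquare δ)
    (g : GL2 ℓ) (htr : Matrix.trace (mat g) = 0) :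
    ∃ x : GL2 ℓ, InNns δ (x * g * x⁻¹) := by
  classical
  set M : Matrix (Fin 2) (Fin 2) (ZMod ℓ) := mat g with hMdef
  have hMval : (g : Matrix (Fin 2) (Fin 2) (ZMod ℓ)) = M := rfl
  have hdetu : IsUnit M.det := by
    rw [← Matrix.isUnit_iff_isUnit_det]
    exact ⟨g, rfl⟩
  set d : ZMod ℓ := M.det with hd
  have hd0 : d ≠ 0 := hdetu.ne_zero
  have htr' : M 1 1 = - M 0 0 := by
    rw [Matrix.trace_fin_two] at htr
    linear_combination htr
  have hdet2 : d = M 0 0 * M 1 1 - M 0 1 * M 1 0 := Matrix.det_fin_two M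
  have hM2 : M * M = (-d) • (1 : Matrix (Fin 2) (Fin 2) (ZMod ℓ)) := by
    ext i j
    fin_cases i <;> fin_cases j <;>
      simp [Matrix.mul_apply, Fin.sum_univ_two, Matrix.one_apply] <;>
      [linear_combination hdet2 + M 0 0 * htr';
       linear_combination M 0 1 * htr';
       linear_combination M 1 0 * htr';
       linear_combination hdet2 + M 1 1 * htr']
  -- choose a cyclic vector for M
  have hvM : ∃ v : Fin 2 → ZMod ℓ, v 0 * M.mulVec v 1 - M.mulVec v 0 * v 1 ≠ 0 := by
    have h2 : (2 : ZMod ℓ) ≠ 0 := by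
      intro h
      have h' : ((2 : ℕ) : ZMod ℓ) = 0 := by exact_mod_cast h
      rw [ZMod.natCast_eq_zero_iff] at h'
      exact hℓ ((Nat.prime_dvd_prime_iff_eq Fact.out Nat.prime_two).mp h')
    by_cases h10 : M 1 0 ≠ 0
    · exact ⟨![1, 0], by
        simpa [Matrix.mulVec, dotProduct, Fin.sum_univ_two] using h10⟩
    · push_neg at h10
      by_cases h01 : M 0 1 ≠ 0
      · exact ⟨![0, 1], by
          simpa [Matrix.mulVec, dotProduct, Fin.sum_univ_two] using neg_ne_zero.mpr h01⟩
      · push_neg at h01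
        have h00 : M 0 0 ≠ 0 := by
          intro h
          apply hd0
          rw [hdet2, h10, h01, h]
          ring
        refine ⟨![1, 1], ?_⟩
        have : (1 : ZMod ℓ) * (M 1 0 * 1 + M 1 1 * 1) -
            (M 0 0 * 1 + M 0 1 * 1) * 1 ≠ 0 := by
          rw [h10, h01, htr']
          intro h
          exact mul_ne_zero h2 h00 (by linear_combination -h)
        simpa [Matrix.mulVec, dotProduct, Fin.sum_univ_two] using this
  obtain ⟨v, hv⟩ := hvM
  obtain ⟨P, hP⟩ := aux_step M d hM2 v hv
  -- choose the target matrix N in N_ns with N² = -d·1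
  have h2 : (2 : ZMod ℓ) ≠ 0 := by
    intro h
    have h' : ((2 : ℕ) : ZMod ℓ) = 0 := by exact_mod_cast h
    rw [ZMod.natCast_eq_zero_iff] at h'
    exact hℓ ((Nat.prime_dvd_prime_iff_eq Fact.out Nat.prime_two).mp h')
  have hN : ∃ N : Matrix (Fin 2) (Fin 2) (ZMod ℓ),
      N * N = (-d) • (1 : Matrix (Fin 2) (Fin 2) (ZMod ℓ)) ∧
      ((N 1 1 = N 0 0 ∧ N 0 1 = δ * N 1 0) ∨ (N 1 1 = - N 0 0 ∧ N 0 1 = - (δ * N 1 0))) ∧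
      (∃ w : Fin 2 → ZMod ℓ, w 0 * N.mulVec w 1 - N.mulVec w 0 * w 1 ≠ 0) := by
    by_cases hsq : IsSquare (-d)
    · obtain ⟨t, ht⟩ := hsq
      have ht0 : t ≠ 0 := by
        intro h
        apply hd0
        have hdz : -d = 0 := by rw [ht, h]; ring
        exact neg_eq_zero.mp hdz
      refine ⟨Matrix.of ![![t, 0], ![0, -t]], ?_, Or.inr ⟨by simp, by simp⟩,
        ![1, 1], ?_⟩
      · ext i j
        fin_cases i <;> fin_cases j <;>
          simp [Matrix.mul_apply, Fin.sum_univ_two, Matrix.one_apply] <;>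
          linear_combination -ht
      · have : (1 : ZMod ℓ) * (-t) - t * 1 ≠ 0 := by
          intro h
          exact mul_ne_zero h2 ht0 (by linear_combination -h)
        simpa [Matrix.mulVec, dotProduct, Fin.sum_univ_two] using this
    · have hδ0 : δ ≠ 0 := fun h => hδ (h ▸ IsSquare.zero)
      have hnd : ¬ IsSquare (-d) := hsq
      obtain ⟨c, hc⟩ := aux_nonsq_mul hnd hδ
      set s : ZMod ℓ := c * δ⁻¹ with hs
      have hds : δ * s * s = -d := by
        rw [hs]
        field_simp
        linear_combination -hc
      have hs0 : s ≠ 0 := by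
        intro h
        apply hd0
        have hdz : -d = 0 := by rw [← hds, h]; ring
        exact neg_eq_zero.mp hdz
      refine ⟨Matrix.of ![![0, δ * s], ![s, 0]], ?_, Or.inl ⟨by simp, by simp⟩,
        ![1, 0], ?_⟩
      · ext i j
        fin_cases i <;> fin_cases j <;>
          simp [Matrix.mul_apply, Fin.sum_univ_two, Matrix.one_apply] <;>
          linear_combination hds
      · simpa [Matrix.mulVec, dotProduct, Fin.sum_univ_two] using hs0
  obtain ⟨N, hN2, hshape, w, hw⟩ := hN
  obtain ⟨Q, hQ⟩ := aux_step N d hN2 w hw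
  refine ⟨Q * P⁻¹, ?_⟩
  have hval : mat (Q * P⁻¹ * g * (Q * P⁻¹)⁻¹) = N := by
    have := aux_finish g P Q N (Matrix.of ![![0, -d], ![1, 0]]) (by rw [hMval]; exact hP) hQ
    exact this
  rcases hshape with h | h
  · exact Or.inl ⟨by rw [hval]; exact h.1, by rw [hval]; exact h.2⟩
  · exact Or.inr ⟨by rw [hval]; exact h.1, by rw [hval]; exact h.2⟩
end

section
/- Let ℓ be a prime, let g ∈ GL₂(F_ℓ) have image h ∈ PGL₂(F_ℓ) of order r under the natural action of PGL₂(F_ℓ) on the projective line P¹(F_ℓ), let k be the number of points of P¹(F_ℓ) fixed by h, and let s be the number of h-orbits on P¹(F_ℓ). Then: (a) k is 0, 1, 2, or ℓ + 1; (b) each of the s − k nontrivial (non-singleton) orbits has size exactly r; and (c) if ℓ > 2, the sign of h as a permutation of P¹(F_ℓ) equals (−1)^s. -/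
open Matrix

open Projectivization in
/-- The projective line `P¹(F_ℓ)`. -/
abbrev Pline (ℓ : ℕ) [Fact ℓ.Prime] : Type :=
  Projectivization (ZMod ℓ) (Fin 2 → ZMod ℓ)

instance {ℓ : ℕ} [Fact ℓ.Prime] : Finite (Pline ℓ) := Quotient.finite _

noncomputable instance {ℓ : ℕ} [Fact ℓ.Prime] : Fintype (Pline ℓ) := Fintype.ofFinite _

noncomputable instance {ℓ : ℕ} [Fact ℓ.Prime] : DecidableEq (Pline ℓ) := Classical.decEq _

/-- The linear automorphism of `F_ℓ²` given by `g ∈ GL₂(F_ℓ)`. -/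
def glEquiv {ℓ : ℕ} (g : GL2 ℓ) : (Fin 2 → ZMod ℓ) ≃ₗ[ZMod ℓ] (Fin 2 → ZMod ℓ) :=
  (Matrix.GeneralLinearGroup.toLin g).toLinearEquiv

/-- The permutation of `P¹(F_ℓ)` induced by `g ∈ GL₂(F_ℓ)` (the natural action of the
image of `g` in `PGL₂(F_ℓ)`). -/
noncomputable def projPerm {ℓ : ℕ} [Fact ℓ.Prime] (g : GL2 ℓ) : Equiv.Perm (Pline ℓ) :=
  Equiv.ofBijective
    (Projectivization.map (glEquiv g).toLinearMap (glEquiv g).injective)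
    (Finite.injective_iff_bijective.mp (Projectivization.map_injective _ _))

section Aux

variable {ℓ : ℕ} [Fact ℓ.Prime]

lemma glEquiv_apply (g : GL2 ℓ) (v : Fin 2 → ZMod ℓ) :
    glEquiv g v = (mat g).mulVec v := rfl

lemma mat_mulVec_ne_zero (g : GL2 ℓ) {v : Fin 2 → ZMod ℓ} (hv : v ≠ 0) :
    (mat g).mulVec v ≠ 0 := by
  have : glEquiv g v ≠ 0 := by
    simp only [ne_eq, LinearEquiv.map_eq_zero_iff]; exact hv
  rwa [glEquiv_apply] at this

lemma projPerm_mk (g : GL2 ℓ) (v : Fin 2 → ZMod ℓ) (hv : v ≠ 0) :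
    projPerm g (Projectivization.mk _ v hv) =
      Projectivization.mk _ ((mat g).mulVec v) (mat_mulVec_ne_zero g hv) := by
  simp only [projPerm, Equiv.ofBijective_apply]
  rw [Projectivization.map_mk]
  rfl

lemma mat_mul (g h : GL2 ℓ) : mat (g * h) = mat g * mat h := rfl

lemma mat_pow (g : GL2 ℓ) (n : ℕ) : mat (g ^ n) = (mat g) ^ n := by
  induction n with
  | zero => rfl
  | succ n ih => rw [pow_succ, pow_succ, ← ih]; rfl

lemma projPerm_mul (g h : GL2 ℓ) : projPerm (g * h) = projPerm g * projPerm h := by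
  ext x
  induction x using Projectivization.ind with
  | h v hv =>
    rw [Equiv.Perm.mul_apply, projPerm_mk, projPerm_mk, projPerm_mk]
    exact (Projectivization.mk_eq_mk_iff _ _ _ _ _).mpr
      ⟨1, by simp only [one_smul, Matrix.mulVec_mulVec, mat_mul]⟩

lemma projPerm_pow (g : GL2 ℓ) (n : ℕ) : projPerm (g ^ n) = (projPerm g) ^ n := by
  induction n with
  | zero =>
    ext x
    induction x using Projectivization.ind with
    | h v hv =>
      rw [pow_zero, pow_zero, Equiv.Perm.one_apply, projPerm_mk]
      congr 1
      show (mat (1 : GL2 ℓ)).mulVec v = v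
      show ((1 : Matrix (Fin 2) (Fin 2) (ZMod ℓ))).mulVec v = v
      rw [Matrix.one_mulVec]
  | succ n ih => rw [pow_succ, pow_succ, projPerm_mul, ih]

lemma projPerm_eq_one_of_scalar {g : GL2 ℓ} {c : ZMod ℓ}
    (hc : mat g = c • 1) : projPerm g = 1 := by
  have hc0 : c ≠ 0 := by
    intro h
    subst h
    have := mat_mulVec_ne_zero g (v := ![1, 0]) (by
      intro hh
      have := congrFun hh 0
      simp at this)
    apply this
    rw [hc]
    simp
  ext x
  induction x using Projectivization.ind with
  | h v hv =>
    rw [Equiv.Perm.one_apply, projPerm_mk]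
    rw [Projectivization.mk_eq_mk_iff]
    refine ⟨Units.mk0 c hc0, ?_⟩
    rw [hc, Units.smul_def, Units.val_mk0, Matrix.smul_mulVec, Matrix.one_mulVec]

/-- If `M` acts as `c` on two linearly independent vectors, it is scalar. -/
lemma matrix_scalar_of_pair {v w : Fin 2 → ZMod ℓ}
    (hind : LinearIndependent (ZMod ℓ) ![v, w]) {M : Matrix (Fin 2) (Fin 2) (ZMod ℓ)}
    {c : ZMod ℓ} (hv : M.mulVec v = c • v) (hw : M.mulVec w = c • w) :
    M = c • 1 := by
  have hspan : Submodule.span (ZMod ℓ) (Set.range ![v, w]) = ⊤ :=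
    hind.span_eq_top_of_card_eq_finrank (by simp [Module.finrank_pi])
  have key : ∀ u : Fin 2 → ZMod ℓ, M.mulVec u = c • u := by
    intro u
    have hu : u ∈ Submodule.span (ZMod ℓ) ({v, w} : Set (Fin 2 → ZMod ℓ)) := by
      have : Set.range ![v, w] = {v, w} := by
        ext z
        constructor
        · rintro ⟨i, rfl⟩; fin_cases i
          · exact Or.inl rfl
          · exact Or.inr rfl
        · rintro (rfl | rfl)
          · exact ⟨0, rfl⟩
          · exact ⟨1, rfl⟩
      rw [← this, hspan]; trivial
    obtain ⟨a, b, rfl⟩ := Submodule.mem_span_pair.mp hu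
    rw [Matrix.mulVec_add, Matrix.mulVec_smul, Matrix.mulVec_smul, hv, hw,
      smul_add, smul_comm a c v, smul_comm b c w]
  ext i j
  have := congrFun (key (Pi.single j 1)) i
  rw [Matrix.mulVec_single] at this
  simp only [MulOpposite.op_one, one_smul, Matrix.col_apply] at this
  rw [this]
  simp [Matrix.smul_apply, Matrix.one_apply, Pi.single_apply, eq_comm]

lemma indep_of_ne {v w : Fin 2 → ZMod ℓ} (hv : v ≠ 0) (hw : w ≠ 0)
    (hne : Projectivization.mk (ZMod ℓ) v hv ≠ Projectivization.mk (ZMod ℓ) w hw) :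
    LinearIndependent (ZMod ℓ) ![v, w] := by
  rw [linearIndependent_fin2]
  refine ⟨by simpa using hw, fun a ha => ?_⟩
  simp only [Matrix.cons_val_one, Matrix.head_cons, Matrix.cons_val_zero] at ha
  apply hne
  rw [Projectivization.mk_eq_mk_iff]
  have ha0 : a ≠ 0 := by rintro rfl; rw [zero_smul] at ha; exact hv ha.symm
  exact ⟨Units.mk0 a ha0, ha⟩

lemma eigen_of_fixed {g : GL2 ℓ} {x : Pline ℓ} (h : projPerm g x = x) :
    ∃ c : (ZMod ℓ)ˣ, (mat g).mulVec x.rep = (c : ZMod ℓ) • x.rep := by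
  conv_rhs at h => rw [← Projectivization.mk_rep x]
  conv_lhs at h => rw [← Projectivization.mk_rep x, projPerm_mk]
  rw [Projectivization.mk_eq_mk_iff] at h
  obtain ⟨a, ha⟩ := h
  exact ⟨a, ha.symm⟩

end Aux
section Aux2

variable {ℓ : ℕ} [Fact ℓ.Prime]

lemma pair_eq_zero {v w : Fin 2 → ZMod ℓ} (hind : LinearIndependent (ZMod ℓ) ![v, w])
    {a b : ZMod ℓ} (h : a • v + b • w = 0) : a = 0 ∧ b = 0 :=
  LinearIndependent.pair_iff.mp hind a b h

/-- If `projPerm g` fixes three distinct points, then `g` is scalar. -/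
lemma scalar_of_three_fixed {g : GL2 ℓ} {x y z : Pline ℓ}
    (hxy : x ≠ y) (hxz : x ≠ z) (hyz : y ≠ z)
    (hx : projPerm g x = x) (hy : projPerm g y = y) (hz : projPerm g z = z) :
    ∃ c : ZMod ℓ, c ≠ 0 ∧ mat g = c • 1 := by
  obtain ⟨a, ha⟩ := eigen_of_fixed hx
  obtain ⟨b, hb⟩ := eigen_of_fixed hy
  obtain ⟨e, he⟩ := eigen_of_fixed hz
  set v := x.rep with hv
  set w := y.rep with hw
  set u := z.rep with hu
  have hvw : LinearIndependent (ZMod ℓ) ![v, w] := by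
    apply indep_of_ne
    rw [Projectivization.mk_rep, Projectivization.mk_rep]
    exact hxy
  have hspan : Submodule.span (ZMod ℓ) (Set.range ![v, w]) = ⊤ :=
    hvw.span_eq_top_of_card_eq_finrank (by simp [Module.finrank_pi])
  have hmem : u ∈ Submodule.span (ZMod ℓ) ({v, w} : Set (Fin 2 → ZMod ℓ)) := by
    have hr : Set.range ![v, w] = {v, w} := by
      ext t
      constructor
      · rintro ⟨i, rfl⟩; fin_cases i
        · exact Or.inl rfl
        · exact Or.inr rfl
      · rintro (rfl | rfl)
        · exact ⟨0, rfl⟩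
        · exact ⟨1, rfl⟩
    rw [← hr, hspan]; trivial
  obtain ⟨c, d, hcd⟩ := Submodule.mem_span_pair.mp hmem
  have hc0 : c ≠ 0 := by
    rintro rfl
    have hd0 : d ≠ 0 := by
      rintro rfl
      apply Projectivization.rep_nonzero z
      rw [← hu, ← hcd]; simp
    apply hyz
    rw [← Projectivization.mk_rep y, ← Projectivization.mk_rep z]
    rw [Projectivization.mk_eq_mk_iff]
    refine ⟨(Units.mk0 d hd0)⁻¹, ?_⟩
    rw [Units.smul_def, ← hw, ← hu, ← hcd]
    simp only [zero_smul, zero_add]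
    rw [smul_smul, Units.val_inv_eq_inv_val, Units.val_mk0, inv_mul_cancel₀ hd0, one_smul]
  have hd0 : d ≠ 0 := by
    rintro rfl
    apply hxz
    rw [← Projectivization.mk_rep x, ← Projectivization.mk_rep z]
    rw [Projectivization.mk_eq_mk_iff]
    refine ⟨(Units.mk0 c hc0)⁻¹, ?_⟩
    rw [Units.smul_def, ← hv, ← hu, ← hcd]
    simp only [zero_smul, add_zero]
    rw [smul_smul, Units.val_inv_eq_inv_val, Units.val_mk0, inv_mul_cancel₀ hc0, one_smul]
  -- from g u = e u and u = c v + d w: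
  have heq : (c * ((a : ZMod ℓ) - e)) • v + (d * ((b : ZMod ℓ) - e)) • w = 0 := by
    have h1 : (mat g).mulVec u = (e : ZMod ℓ) • (c • v + d • w) := by rw [he, hcd]
    rw [← hcd, Matrix.mulVec_add, Matrix.mulVec_smul, Matrix.mulVec_smul, ha, hb] at h1
    linear_combination (norm := module) h1
  obtain ⟨h1, h2⟩ := pair_eq_zero hvw heq
  have hae : (a : ZMod ℓ) = e := by
    have := mul_eq_zero.mp h1
    rcases this with h | h
    · exact absurd h hc0
    · exact sub_eq_zero.mp h
  have hbe : (b : ZMod ℓ) = e := by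
    have := mul_eq_zero.mp h2
    rcases this with h | h
    · exact absurd h hd0
    · exact sub_eq_zero.mp h
  refine ⟨(a : ZMod ℓ), a.ne_zero, ?_⟩
  apply matrix_scalar_of_pair hvw ha
  rw [hb, hbe, hae]

end Aux2
section Aux3

variable {ℓ : ℕ} [Fact ℓ.Prime]

/-- The elementary matrix `[[1,1],[0,1]]` as an element of `GL₂`. -/
def Eup (ℓ : ℕ) : GL2 ℓ :=
  ⟨!![1, 1; 0, 1], !![1, -1; 0, 1], by
    ext i j; fin_cases i <;> fin_cases j <;>
      simp [Matrix.mul_apply, Fin.sum_univ_two], by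
    ext i j; fin_cases i <;> fin_cases j <;>
      simp [Matrix.mul_apply, Fin.sum_univ_two]⟩

/-- The elementary matrix `[[1,0],[1,1]]` as an element of `GL₂`. -/
def Elow (ℓ : ℕ) : GL2 ℓ :=
  ⟨!![1, 0; 1, 1], !![1, 0; -1, 1], by
    ext i j; fin_cases i <;> fin_cases j <;>
      simp [Matrix.mul_apply, Fin.sum_univ_two], by
    ext i j; fin_cases i <;> fin_cases j <;>
      simp [Matrix.mul_apply, Fin.sum_univ_two]⟩

lemma mem_center_iff_scalar (g : GL2 ℓ) :
    g ∈ Subgroup.center (GL2 ℓ) ↔ ∃ c : ZMod ℓ, c ≠ 0 ∧ mat g = c • 1 := by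
  constructor
  · intro hg
    rw [Subgroup.mem_center_iff] at hg
    have h1 : mat (Eup ℓ) * mat g = mat g * mat (Eup ℓ) := by
      rw [← mat_mul, ← mat_mul, hg (Eup ℓ)]
    have h2 : mat (Elow ℓ) * mat g = mat g * mat (Elow ℓ) := by
      rw [← mat_mul, ← mat_mul, hg (Elow ℓ)]
    set A := mat g with hA
    have e00 := congrFun (congrFun h1 0) 0
    have e01 := congrFun (congrFun h1 0) 1
    have f00 := congrFun (congrFun h2 0) 0
    have f11 := congrFun (congrFun h2 1) 1
    simp only [Matrix.mul_apply, Fin.sum_univ_two, Eup, Elow, mat,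
      Matrix.cons_val', Matrix.cons_val_zero, Matrix.cons_val_one, Matrix.head_cons,
      Matrix.head_fin_const, Matrix.empty_val', Matrix.cons_val_fin_one,
      Matrix.of_apply] at e00 e01 f00 f11
    -- from these: A 1 0 = 0, A 0 1 = 0, A 0 0 = A 1 1
    have hA10 : A 1 0 = 0 := by linear_combination e00
    have hA01 : A 0 1 = 0 := by linear_combination -f00
    have hAd : A 0 0 = A 1 1 := by linear_combination -e01
    refine ⟨A 0 0, ?_, ?_⟩
    · intro h0
      have hdet : IsUnit (A.det) := by
        rw [hA]
        exact (Matrix.isUnit_iff_isUnit_det _).mp g.isUnit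
      rw [Matrix.det_fin_two, hA10, hA01, ← hAd, h0] at hdet
      simp at hdet
    · ext i j
      fin_cases i <;> fin_cases j <;>
        simp [hA01, hA10, ← hAd, Matrix.one_apply]
  · rintro ⟨c, hc0, hc⟩
    rw [Subgroup.mem_center_iff]
    intro h
    have : mat (h * g) = mat (g * h) := by
      rw [mat_mul, mat_mul, hc, Matrix.mul_smul, Matrix.smul_mul, mul_one, one_mul]
    exact Units.ext this
end Aux3
section Aux4

variable {ℓ : ℕ} [Fact ℓ.Prime]

lemma vec10_ne : (![1, 0] : Fin 2 → ZMod ℓ) ≠ 0 := by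
  intro h; have := congrFun h 0; simp at this
lemma vec01_ne : (![0, 1] : Fin 2 → ZMod ℓ) ≠ 0 := by
  intro h; have := congrFun h 1; simp at this
lemma vec11_ne : (![1, 1] : Fin 2 → ZMod ℓ) ≠ 0 := by
  intro h; have := congrFun h 0; simp at this

/-- Three distinct points of the projective line. -/
noncomputable def pt0 : Pline ℓ := Projectivization.mk _ ![1, 0] vec10_ne
noncomputable def pt1 : Pline ℓ := Projectivization.mk _ ![0, 1] vec01_ne
noncomputable def pt2 : Pline ℓ := Projectivization.mk _ ![1, 1] vec11_ne

lemma pt0_ne_pt1 : (pt0 : Pline ℓ) ≠ pt1 := by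
  rw [pt0, pt1, Ne, Projectivization.mk_eq_mk_iff]
  rintro ⟨a, ha⟩
  have := congrFun ha 0
  simp [Units.smul_def] at this

lemma pt0_ne_pt2 : (pt0 : Pline ℓ) ≠ pt2 := by
  rw [pt0, pt2, Ne, Projectivization.mk_eq_mk_iff]
  rintro ⟨a, ha⟩
  have h0 := congrFun ha 0
  have h1 := congrFun ha 1
  simp [Units.smul_def] at h0 h1

lemma pt1_ne_pt2 : (pt1 : Pline ℓ) ≠ pt2 := by
  rw [pt1, pt2, Ne, Projectivization.mk_eq_mk_iff]
  rintro ⟨a, ha⟩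
  have h0 := congrFun ha 0
  simp [Units.smul_def] at h0

lemma projPerm_eq_one_iff (g : GL2 ℓ) :
    projPerm g = 1 ↔ ∃ c : ZMod ℓ, c ≠ 0 ∧ mat g = c • 1 := by
  constructor
  · intro h
    exact scalar_of_three_fixed pt0_ne_pt1 pt0_ne_pt2 pt1_ne_pt2
      (by rw [h]; rfl) (by rw [h]; rfl) (by rw [h]; rfl)
  · rintro ⟨c, hc0, hc⟩
    exact projPerm_eq_one_of_scalar hc

lemma orderOf_toPGL_eq (g : GL2 ℓ) : orderOf (toPGL ℓ g) = orderOf (projPerm g) := by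
  rw [orderOf_eq_orderOf_iff]
  intro n
  rw [← map_pow, toPGL, QuotientGroup.mk'_apply, QuotientGroup.eq_one_iff,
    mem_center_iff_scalar, ← projPerm_eq_one_iff, projPerm_pow]

/-- An explicit enumeration of the projective line. -/
noncomputable def plinePt (t : Option (ZMod ℓ)) : Pline ℓ :=
  match t with
  | none => pt0
  | some t => Projectivization.mk _ ![t, 1] (by
      intro h; have := congrFun h 1; simp at this)

lemma plinePt_bijective : Function.Bijective (plinePt (ℓ := ℓ)) := by
  constructor
  · intro t s hts
    match t, s with
    | none, none => rfl
    | none, some s =>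
      exfalso
      rw [plinePt, plinePt, pt0, Projectivization.mk_eq_mk_iff] at hts
      obtain ⟨a, ha⟩ := hts
      have := congrFun ha 1
      simp [Units.smul_def] at this
    | some t, none =>
      exfalso
      rw [plinePt, plinePt, pt0, Projectivization.mk_eq_mk_iff] at hts
      obtain ⟨a, ha⟩ := hts
      have := congrFun ha 1
      simp [Units.smul_def] at this
    | some t, some s =>
      rw [plinePt, plinePt, Projectivization.mk_eq_mk_iff] at hts
      obtain ⟨a, ha⟩ := hts
      have h1 := congrFun ha 1
      have h0 := congrFun ha 0
      simp [Units.smul_def] at h0 h1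
      rw [h1] at h0
      simp at h0
      rw [h0]
  · intro x
    induction x using Projectivization.ind with
    | h v hv =>
      rcases eq_or_ne (v 1) 0 with h1 | h1
      · refine ⟨none, ?_⟩
        rw [plinePt, pt0, Projectivization.mk_eq_mk_iff]
        have h0 : v 0 ≠ 0 := by
          intro h0
          apply hv
          funext i; fin_cases i
          · exact h0
          · exact h1
        refine ⟨(Units.mk0 (v 0) h0)⁻¹, ?_⟩
        funext i; fin_cases i <;>
          simp [Units.smul_def, h1, inv_mul_cancel₀ h0]
      · refine ⟨some (v 0 / v 1), ?_⟩
        rw [plinePt, Projectivization.mk_eq_mk_iff]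
        refine ⟨(Units.mk0 (v 1) h1)⁻¹, ?_⟩
        funext i; fin_cases i <;>
          simp [Units.smul_def, div_eq_inv_mul, inv_mul_cancel₀ h1]

lemma card_pline : Nat.card (Pline ℓ) = ℓ + 1 := by
  rw [← Nat.card_eq_of_bijective _ plinePt_bijective]
  simp [Nat.card_eq_fintype_card, Fintype.card_option, ZMod.card]

end Aux4
section PermCount

variable {α : Type*} [Fintype α] [DecidableEq α]

lemma orbitRel_mk_eq_mk_iff (σ : Equiv.Perm α) (x y : α) :
    (Quotient.mk'' x : MulAction.orbitRel.Quotient (Subgroup.zpowers σ) α) = Quotient.mk'' y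
      ↔ σ.SameCycle y x := by
  rw [Quotient.eq'']
  change x ∈ MulAction.orbit (↥(Subgroup.zpowers σ)) y ↔ _
  rw [MulAction.mem_orbit_iff]
  constructor
  · rintro ⟨⟨g, n, rfl⟩, hg⟩
    exact ⟨n, hg⟩
  · rintro ⟨n, hn⟩
    exact ⟨⟨σ ^ n, n, rfl⟩, hn⟩

/-- A chosen point in the support of a cycle factor. -/
noncomputable def cyclePt {σ : Equiv.Perm α} (c : σ.cycleFactorsFinset) : α :=
  (Equiv.Perm.mem_cycleFactorsFinset_iff.mp c.2).1.choose

lemma cyclePt_mem {σ : Equiv.Perm α} (c : σ.cycleFactorsFinset) :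
    cyclePt c ∈ (c : Equiv.Perm α).support :=
  Equiv.Perm.mem_support.mpr (Equiv.Perm.mem_cycleFactorsFinset_iff.mp c.2).1.choose_spec.1

lemma sigma_cyclePt_ne {σ : Equiv.Perm α} (c : σ.cycleFactorsFinset) :
    σ (cyclePt c) ≠ cyclePt c := by
  have h := (Equiv.Perm.mem_cycleFactorsFinset_iff.mp c.2).2 (cyclePt c) (cyclePt_mem c)
  rw [← h]
  exact Equiv.Perm.mem_support.mp (cyclePt_mem c)

lemma cycleOf_cyclePt {σ : Equiv.Perm α} (c : σ.cycleFactorsFinset) :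
    σ.cycleOf (cyclePt c) = (c : Equiv.Perm α) :=
  (Equiv.Perm.cycle_is_cycleOf (cyclePt_mem c) c.2).symm

noncomputable def orbitSumMap (σ : Equiv.Perm α) :
    ({x // σ x = x} ⊕ σ.cycleFactorsFinset) →
      MulAction.orbitRel.Quotient (Subgroup.zpowers σ) α
  | Sum.inl x => Quotient.mk'' x.1
  | Sum.inr c => Quotient.mk'' (cyclePt c)

set_option maxHeartbeats 2000000 in
lemma orbitSumMap_bijective (σ : Equiv.Perm α) : Function.Bijective (orbitSumMap σ) := by
  constructor
  · rintro (⟨x, hx⟩ | c) (⟨y, hy⟩ | d) h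
    · simp only [orbitSumMap] at h
      rw [orbitRel_mk_eq_mk_iff] at h
      obtain ⟨n, hn⟩ := h
      have : (σ ^ n) y = y := Function.IsFixedPt.perm_zpow hy n
      rw [this] at hn
      simp [hn]
    · exfalso
      simp only [orbitSumMap] at h
      rw [orbitRel_mk_eq_mk_iff] at h
      obtain ⟨n, hn⟩ := h.symm
      have hfix : (σ ^ n) x = x := Function.IsFixedPt.perm_zpow hx n
      rw [hfix] at hn
      apply sigma_cyclePt_ne d
      rw [← hn, hx, hn]
    · exfalso
      simp only [orbitSumMap] at h
      rw [orbitRel_mk_eq_mk_iff] at h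
      obtain ⟨n, hn⟩ := h
      have hfix : (σ ^ n) y = y := Function.IsFixedPt.perm_zpow hy n
      rw [hfix] at hn
      apply sigma_cyclePt_ne c
      rw [← hn, hy, hn]
    · simp only [orbitSumMap] at h
      rw [orbitRel_mk_eq_mk_iff] at h
      have hc := h.cycleOf_eq
      rw [cycleOf_cyclePt, cycleOf_cyclePt] at hc
      congr 1
      exact Subtype.ext hc.symm
  · intro ω
    induction ω using Quotient.inductionOn' with
    | h x =>
      rcases eq_or_ne (σ x) x with hx | hx
      · refine ⟨Sum.inl ⟨x, hx⟩, ?_⟩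
        simp only [orbitSumMap]
      · have hmem : σ.cycleOf x ∈ σ.cycleFactorsFinset :=
          Equiv.Perm.cycleOf_mem_cycleFactorsFinset_iff.mpr (Equiv.Perm.mem_support.mpr hx)
        refine ⟨Sum.inr ⟨σ.cycleOf x, hmem⟩, ?_⟩
        simp only [orbitSumMap]
        rw [orbitRel_mk_eq_mk_iff]
        have hpt : cyclePt (⟨σ.cycleOf x, hmem⟩ : σ.cycleFactorsFinset) ∈ (σ.cycleOf x).support :=
          cyclePt_mem _
        rw [Equiv.Perm.mem_support_cycleOf_iff] at hpt
        exact hpt.1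

lemma card_orbit_quotient (σ : Equiv.Perm α) :
    Nat.card (MulAction.orbitRel.Quotient (Subgroup.zpowers σ) α)
      = Nat.card {x // σ x = x} + σ.cycleFactorsFinset.card := by
  rw [← Nat.card_eq_of_bijective _ (orbitSumMap_bijective σ), Nat.card_sum]
  congr 1
  rw [Nat.card_eq_fintype_card, Fintype.card_coe]

lemma card_fixed_add_support (σ : Equiv.Perm α) :
    Nat.card {x // σ x = x} + σ.support.card = Fintype.card α := by
  rw [Nat.card_eq_fintype_card, Fintype.card_subtype]
  have hsupp : σ.support = Finset.univ.filter (fun x => ¬ σ x = x) := by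
    ext a
    simp [Equiv.Perm.mem_support]
  rw [hsupp]
  exact Finset.card_filter_add_card_filter_not _

lemma neg_one_pow_congr' {a b : ℕ} (h : Even (a + b)) : ((-1 : ℤˣ) ^ a = (-1) ^ b) := by
  rcases Nat.even_or_odd a with ha | ha
  · have hb : Even b := (Nat.even_add.mp h).mp ha
    rw [ha.neg_one_pow, hb.neg_one_pow]
  · have hb : Odd b := by
      rcases Nat.even_or_odd b with hb | hb
      · exact absurd ((Nat.even_add.mp h).mpr hb) (Nat.not_even_iff_odd.mpr ha)
      · exact hb
    rw [ha.neg_one_pow, hb.neg_one_pow]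

lemma sign_eq_neg_one_pow_orbits (σ : Equiv.Perm α) (h2 : Even (Fintype.card α)) :
    Equiv.Perm.sign σ =
      (-1 : ℤˣ) ^ (Nat.card (MulAction.orbitRel.Quotient (Subgroup.zpowers σ) α)) := by
  rw [Equiv.Perm.sign_of_cycleType, card_orbit_quotient]
  have hct : Multiset.card σ.cycleType = σ.cycleFactorsFinset.card := by
    rw [Equiv.Perm.cycleType]
    simp
  rw [Equiv.Perm.sum_cycleType, hct]
  apply neg_one_pow_congr'
  have hk := card_fixed_add_support σ
  have : σ.support.card + σ.cycleFactorsFinset.card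
      + (Nat.card {x // σ x = x} + σ.cycleFactorsFinset.card)
      = Fintype.card α + 2 * σ.cycleFactorsFinset.card := by omega
  rw [this]
  exact h2.add (even_two_mul _)

end PermCount
section Aux6

variable {ℓ : ℕ} [Fact ℓ.Prime]

/-- If `σ` sends `x` to a different point and back, then `g²` is scalar. -/
lemma sq_scalar_of_two_cycle {g : GL2 ℓ} {x : Pline ℓ}
    (h1 : projPerm g x ≠ x) (h2 : projPerm g (projPerm g x) = x) :
    projPerm (g ^ 2) = 1 := by
  have hxfix : projPerm g x = Projectivization.mk _ ((mat g).mulVec x.rep)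
      (mat_mulVec_ne_zero g (Projectivization.rep_nonzero x)) := by
    conv_lhs => rw [← Projectivization.mk_rep x, projPerm_mk]
  have hyfix : x = Projectivization.mk _ ((mat g).mulVec (projPerm g x).rep)
      (mat_mulVec_ne_zero g (Projectivization.rep_nonzero (projPerm g x))) := by
    conv_lhs => rw [← h2]
    conv_lhs => rw [← Projectivization.mk_rep (projPerm g x), projPerm_mk]
  have ha : ∃ a : (ZMod ℓ)ˣ,
      (mat g).mulVec x.rep = (a : ZMod ℓ) • (projPerm g x).rep := by
    have h' : Projectivization.mk (ZMod ℓ) ((mat g).mulVec x.rep)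
        (mat_mulVec_ne_zero g (Projectivization.rep_nonzero x)) =
        Projectivization.mk (ZMod ℓ) (projPerm g x).rep
          ((projPerm g x).rep_nonzero) := by
      rw [← hxfix, Projectivization.mk_rep]
    rw [Projectivization.mk_eq_mk_iff] at h'
    obtain ⟨a, haa⟩ := h'
    exact ⟨a, haa.symm⟩
  have hb : ∃ b : (ZMod ℓ)ˣ,
      (mat g).mulVec (projPerm g x).rep = (b : ZMod ℓ) • x.rep := by
    have h' : Projectivization.mk (ZMod ℓ) ((mat g).mulVec (projPerm g x).rep)
        (mat_mulVec_ne_zero g ((projPerm g x).rep_nonzero)) =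
        Projectivization.mk (ZMod ℓ) x.rep (x.rep_nonzero) := by
      rw [← hyfix, Projectivization.mk_rep]
    rw [Projectivization.mk_eq_mk_iff] at h'
    obtain ⟨b, hbb⟩ := h'
    exact ⟨b, hbb.symm⟩
  obtain ⟨a, ha⟩ := ha
  obtain ⟨b, hb⟩ := hb
  have hvw : LinearIndependent (ZMod ℓ) ![x.rep, (projPerm g x).rep] := by
    apply indep_of_ne x.rep_nonzero (projPerm g x).rep_nonzero
    rw [Projectivization.mk_rep, Projectivization.mk_rep]
    exact fun hh => h1 hh.symm
  have hm2 : mat (g ^ 2) = mat g * mat g := by rw [mat_pow, pow_two]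
  have hgv : (mat (g ^ 2)).mulVec x.rep = ((a : ZMod ℓ) * b) • x.rep := by
    rw [hm2, ← Matrix.mulVec_mulVec, ha, Matrix.mulVec_smul, hb, smul_smul]
  have hgw : (mat (g ^ 2)).mulVec (projPerm g x).rep
      = ((a : ZMod ℓ) * b) • (projPerm g x).rep := by
    rw [hm2, ← Matrix.mulVec_mulVec, hb, Matrix.mulVec_smul, ha, smul_smul,
      mul_comm (b : ZMod ℓ)]
  exact projPerm_eq_one_of_scalar (matrix_scalar_of_pair hvw hgv hgw)

lemma orbit_card_eq_minimalPeriod (σ : Equiv.Perm (Pline ℓ)) (x : Pline ℓ) :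
    Nat.card (MulAction.orbit (Subgroup.zpowers σ) x)
      = Function.minimalPeriod (σ : Pline ℓ → Pline ℓ) x := by
  rw [Nat.card_congr (MulAction.orbitZPowersEquiv σ x), Nat.card_zmod]
  congr 1

end Aux6
/-- Let `g ∈ GL₂(F_ℓ)` have image `h ∈ PGL₂(F_ℓ)` of order `r`, acting on
`P¹(F_ℓ)` via the permutation `σ = projPerm g`; let `k` be the number of fixed points
and `s` the number of orbits of `σ` on `P¹(F_ℓ)`.  Then `k ∈ {0, 1, 2, ℓ + 1}`, every
nontrivial orbit has size exactly `r`, and for `ℓ > 2` the sign of `σ` is `(-1)^s`. -/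
theorem perm_of_projective_line
    {ℓ : ℕ} [Fact ℓ.Prime] (g : GL2 ℓ)
    (r k s : ℕ)
    (hr : r = orderOf (toPGL ℓ g))
    (hk : k = Nat.card {x : Pline ℓ // projPerm g x = x})
    (hs : s = Nat.card
      (MulAction.orbitRel.Quotient (Subgroup.zpowers (projPerm g)) (Pline ℓ))) :
    (k = 0 ∨ k = 1 ∨ k = 2 ∨ k = ℓ + 1) ∧
    (∀ x : Pline ℓ, projPerm g x ≠ x →
      Nat.card (MulAction.orbit (Subgroup.zpowers (projPerm g)) x) = r) ∧
    (2 < ℓ → Equiv.Perm.sign (projPerm g) = (-1 : ℤˣ) ^ s) := by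
  have hr' : r = orderOf (projPerm g) := by rw [hr, orderOf_toPGL_eq]
  refine ⟨?_, ?_, ?_⟩
  · -- part (a)
    by_cases h1 : projPerm g = 1
    · right; right; right
      rw [hk, ← card_pline (ℓ := ℓ)]
      apply Nat.card_congr
      apply Equiv.subtypeUnivEquiv
      intro x
      rw [h1]
      rfl
    · have hle : k ≤ 2 := by
        by_contra hgt
        push_neg at hgt
        have h3 : 2 < Fintype.card {x : Pline ℓ // projPerm g x = x} := by
          rw [← Nat.card_eq_fintype_card, ← hk]; omega
        obtain ⟨a, b, c, hab, hac, hbc⟩ := Fintype.two_lt_card_iff.mp h3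
        obtain ⟨cc, hcc0, hcc⟩ := scalar_of_three_fixed
          (fun h' => hab (Subtype.ext h')) (fun h' => hac (Subtype.ext h'))
          (fun h' => hbc (Subtype.ext h')) a.2 b.2 c.2
        exact h1 (projPerm_eq_one_of_scalar hcc)
      omega
  · -- part (b)
    intro x hx
    set σ := projPerm g with hσ
    have hper : Function.IsPeriodicPt (⇑σ) (orderOf σ) x := by
      show σ^[orderOf σ] x = x
      rw [← Equiv.Perm.coe_pow, pow_orderOf_eq_one]
      rfl
    have hordpos : 0 < orderOf σ := orderOf_pos σ
    set m := Function.minimalPeriod (⇑σ) x with hm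
    have hmdvd : m ∣ orderOf σ := Function.IsPeriodicPt.minimalPeriod_dvd hper
    have hmpos : 0 < m := Function.IsPeriodicPt.minimalPeriod_pos hordpos hper
    have hmx : σ^[m] x = x := Function.isPeriodicPt_minimalPeriod (⇑σ) x
    have hm1 : m ≠ 1 := by
      intro h
      rw [h] at hmx
      simp at hmx
      exact hx hmx
    have hcard : Nat.card (MulAction.orbit (Subgroup.zpowers σ) x) = m :=
      orbit_card_eq_minimalPeriod σ x
    rw [hcard, hr']
    rcases eq_or_lt_of_le (by omega : 2 ≤ m) with h2 | h3
    · -- m = 2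
      have hσ2 : σ (σ x) = x := by
        have : σ^[2] x = x := by rw [h2]; exact hmx
        simpa [Function.iterate_succ, Function.iterate_one] using this
      have hone : projPerm (g ^ 2) = 1 := sq_scalar_of_two_cycle hx hσ2
      rw [projPerm_pow] at hone
      have hdvd2 : orderOf σ ∣ 2 := orderOf_dvd_of_pow_eq_one hone
      have hne1 : orderOf σ ≠ 1 := by
        intro h
        rw [orderOf_eq_one_iff] at h
        apply hx
        rw [h]
        rfl
      rcases (Nat.dvd_prime Nat.prime_two).mp hdvd2 with h | h
      · exact absurd h hne1
      · omega
    · -- m ≥ 3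
      have hx2 : σ (σ x) ≠ x := by
        intro h
        have : Function.IsPeriodicPt (⇑σ) 2 x := by
          show σ^[2] x = x
          simpa [Function.iterate_succ, Function.iterate_one] using h
        have := Function.IsPeriodicPt.minimalPeriod_dvd this
        rw [← hm] at this
        have := Nat.le_of_dvd (by norm_num) this
        omega
      have hx3 : σ (σ x) ≠ σ x := fun h => hx (σ.injective h)
      have hfix : ∀ y : Pline ℓ, (σ ^ m) y = y → projPerm (g ^ m) y = y := by
        intro y hy
        rwa [projPerm_pow]
      have hfx : (σ ^ m) x = x := by rw [Equiv.Perm.coe_pow]; exact hmx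
      have hcomm : σ ^ m * σ = σ * σ ^ m := ((Commute.refl σ).pow_left m)
      have hfsx : (σ ^ m) (σ x) = σ x := by
        have := congrFun (congrArg (fun p : Equiv.Perm (Pline ℓ) => ⇑p) hcomm) x
        simp only [Equiv.Perm.coe_mul, Function.comp_apply] at this
        rw [this, hfx]
      have hfssx : (σ ^ m) (σ (σ x)) = σ (σ x) := by
        have := congrFun (congrArg (fun p : Equiv.Perm (Pline ℓ) => ⇑p) hcomm) (σ x)
        simp only [Equiv.Perm.coe_mul, Function.comp_apply] at this
        rw [this, hfsx]
      obtain ⟨cc, hcc0, hcc⟩ := scalar_of_three_fixed (Ne.symm hx) (Ne.symm hx2) (Ne.symm hx3)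
        (hfix x hfx) (hfix (σ x) hfsx) (hfix (σ (σ x)) hfssx)
      have hone : projPerm (g ^ m) = 1 := projPerm_eq_one_of_scalar hcc
      rw [projPerm_pow] at hone
      have : orderOf σ ∣ m := orderOf_dvd_of_pow_eq_one hone
      exact (Nat.dvd_antisymm hmdvd this).symm ▸ rfl
  · -- part (c)
    intro hl
    have hodd : Odd ℓ := (Fact.out : ℓ.Prime).odd_of_ne_two (by omega)
    have heven : Even (Fintype.card (Pline ℓ)) := by
      rw [← Nat.card_eq_fintype_card, card_pline]
      exact Nat.even_add_one.mpr (Nat.not_even_iff_odd.mpr hodd)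
    rw [hs]
    exact sign_eq_neg_one_pow_orbits (projPerm g) heven
end

section
/- Let ℓ be an odd prime and let G be a subgroup of GL₂(F_ℓ) such that every element of G lies in a conjugate of the nonsplit Cartan subgroup C_ns, and suppose moreover that the determinant map G → F_ℓˣ is surjective. Then either G is contained in a conjugate of C_ns, or G is contained in a conjugate of N_ns and ℓ ≡ 1 (mod 4). -/
open Matrix

set_option linter.unusedSectionVars false
namespace LG

variable {ℓ : ℕ} [Fact ℓ.Prime] {δ : ZMod ℓ}

lemma two_ne (hℓ : ℓ ≠ 2) : (2 : ZMod ℓ) ≠ 0 := by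
  intro h
  have h2 : ((2 : ℕ) : ZMod ℓ) = 0 := by exact_mod_cast h
  rw [CharP.cast_eq_zero_iff (ZMod ℓ) ℓ 2] at h2
  exact hℓ ((Nat.prime_dvd_prime_iff_eq (Fact.out) Nat.prime_two).mp h2)

lemma delta_ne (hδ : ¬ IsSquare δ) : δ ≠ 0 := fun h => hδ ⟨0, by simp [h]⟩

lemma mat_mul (g h : GL2 ℓ) : mat (g * h) = mat g * mat h := rfl

lemma mat_one : mat (1 : GL2 ℓ) = 1 := rfl

lemma mat_inv (g : GL2 ℓ) : mat g⁻¹ = (mat g)⁻¹ := Matrix.coe_units_inv g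

lemma mat_inv_mul (g : GL2 ℓ) : mat g⁻¹ * mat g = 1 := by
  rw [← mat_mul, inv_mul_cancel, mat_one]

lemma mat_mul_inv (g : GL2 ℓ) : mat g * mat g⁻¹ = 1 := by
  rw [← mat_mul, mul_inv_cancel, mat_one]

lemma det_ne_zero (g : GL2 ℓ) : (mat g).det ≠ 0 := by
  have : IsUnit (mat g).det := by
    apply Matrix.isUnit_iff_isUnit_det (mat g) |>.mp
    exact ⟨g, rfl⟩
  exact this.ne_zero

lemma units_ext {g h : GL2 ℓ} (H : mat g = mat h) : g = h := Units.ext H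

/-- conjugation: matrix entries of scalars -/
lemma scalar_entries {g : GL2 ℓ} (h : IsScalar g) :
    mat g 0 1 = 0 ∧ mat g 1 0 = 0 ∧ mat g 1 1 = mat g 0 0 := by
  obtain ⟨c, hc⟩ := h
  rw [hc]; simp [Matrix.smul_apply, Matrix.one_apply]

lemma isScalar_iff {g : GL2 ℓ} :
    IsScalar g ↔ (mat g 0 1 = 0 ∧ mat g 1 0 = 0 ∧ mat g 1 1 = mat g 0 0) := by
  constructor
  · exact scalar_entries
  · rintro ⟨h1, h2, h3⟩
    refine ⟨mat g 0 0, ?_⟩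
    rw [Matrix.eta_fin_two (mat g)]
    ext i j
    fin_cases i <;> fin_cases j <;>
      simp [h1, h2, h3, Matrix.one_apply]

lemma conj_conj (X z x : GL2 ℓ) :
    (X*z*X⁻¹)*(X*x*X⁻¹)*(X*z*X⁻¹)⁻¹ = X*(z*x*z⁻¹)*X⁻¹ := by group

lemma scalar_conj {x g : GL2 ℓ} (h : IsScalar g) : IsScalar (x * g * x⁻¹) := by
  obtain ⟨c, hc⟩ := h
  refine ⟨c, ?_⟩
  rw [mat_mul, mat_mul, hc]
  rw [Matrix.mul_smul, Matrix.smul_mul, mul_one, mat_mul_inv]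

lemma scalar_conj_iff {x g : GL2 ℓ} : IsScalar (x * g * x⁻¹) ↔ IsScalar g := by
  constructor
  · intro h
    have h2 := scalar_conj (x := x⁻¹) h
    have : x⁻¹ * (x * g * x⁻¹) * x⁻¹⁻¹ = g := by group
    rwa [this] at h2
  · exact scalar_conj

lemma trace_conj (x g : GL2 ℓ) : (mat (x * g * x⁻¹)).trace = (mat g).trace := by
  rw [mat_mul, mat_mul]
  rw [Matrix.trace_mul_comm]
  rw [← Matrix.mul_assoc, mat_inv_mul, Matrix.one_mul]

lemma det_conj (x g : GL2 ℓ) : (mat (x * g * x⁻¹)).det = (mat g).det := by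
  rw [mat_mul, mat_mul, Matrix.det_mul, Matrix.det_mul]
  have h1 : (mat x).det * (mat x⁻¹).det = 1 := by
    rw [← Matrix.det_mul, mat_mul_inv, Matrix.det_one]
  calc (mat x).det * (mat g).det * (mat x⁻¹).det
      = (mat g).det * ((mat x).det * (mat x⁻¹).det) := by ring
    _ = (mat g).det := by rw [h1, mul_one]

/-- discriminant -/
def disc {ℓ : ℕ} (g : GL2 ℓ) : ZMod ℓ := ((mat g).trace)^2 - 4 * (mat g).det

lemma disc_conj (x g : GL2 ℓ) : disc (x * g * x⁻¹) = disc g := by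
  unfold disc; rw [trace_conj, det_conj]

/-! ### C_ns form algebra -/

lemma cns_one : InCns δ (1 : GL2 ℓ) := by
  constructor <;> simp [mat_one, Matrix.one_apply]

lemma scalar_cns {g : GL2 ℓ} (h : IsScalar g) : InCns δ g := by
  obtain ⟨h1, h2, h3⟩ := scalar_entries h
  exact ⟨h3, by rw [h1, h2, mul_zero]⟩

lemma cns_mul {g h : GL2 ℓ} (hg : InCns δ g) (hh : InCns δ h) : InCns δ (g * h) := by
  obtain ⟨a1, a2⟩ := hg; obtain ⟨b1, b2⟩ := hh
  constructor <;>
    simp only [mat_mul, Matrix.mul_apply, Fin.sum_univ_two, a1, a2, b1, b2] <;> ring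

lemma cns_det {g : GL2 ℓ} (hg : InCns δ g) :
    (mat g).det = (mat g 0 0)^2 - δ * (mat g 1 0)^2 := by
  rw [Matrix.det_fin_two, hg.1, hg.2]; ring

lemma cns_trace {g : GL2 ℓ} (hg : InCns δ g) : (mat g).trace = 2 * mat g 0 0 := by
  rw [Matrix.trace_fin_two, hg.1]; ring

lemma cns_inv {g : GL2 ℓ} (hg : InCns δ g) : InCns δ g⁻¹ := by
  obtain ⟨a1, a2⟩ := hg
  have h := mat_inv g
  rw [Matrix.inv_def, Matrix.adjugate_fin_two] at h
  constructor <;> rw [h] <;>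
    simp only [Matrix.smul_apply, Matrix.cons_val', Matrix.cons_val_zero, Matrix.cons_val_one,
      Matrix.head_cons, Matrix.head_fin_const, Matrix.empty_val', Matrix.cons_val_fin_one,
      Matrix.of_apply, smul_eq_mul, a1, a2] <;> ring

lemma cns_mul_anti {g h : GL2 ℓ} (hg : InCns δ g) (hh : InNnsAnti δ h) :
    InNnsAnti δ (g * h) := by
  obtain ⟨a1, a2⟩ := hg; obtain ⟨b1, b2⟩ := hh
  constructor <;>
    simp only [mat_mul, Matrix.mul_apply, Fin.sum_univ_two, a1, a2, b1, b2] <;> ring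

lemma anti_mul_cns {g h : GL2 ℓ} (hg : InNnsAnti δ g) (hh : InCns δ h) :
    InNnsAnti δ (g * h) := by
  obtain ⟨a1, a2⟩ := hg; obtain ⟨b1, b2⟩ := hh
  constructor <;>
    simp only [mat_mul, Matrix.mul_apply, Fin.sum_univ_two, a1, a2, b1, b2] <;> ring

lemma anti_mul_anti {g h : GL2 ℓ} (hg : InNnsAnti δ g) (hh : InNnsAnti δ h) :
    InCns δ (g * h) := by
  obtain ⟨a1, a2⟩ := hg; obtain ⟨b1, b2⟩ := hh
  constructor <;>
    simp only [mat_mul, Matrix.mul_apply, Fin.sum_univ_two, a1, a2, b1, b2] <;> ring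

lemma anti_inv {g : GL2 ℓ} (hg : InNnsAnti δ g) : InNnsAnti δ g⁻¹ := by
  obtain ⟨a1, a2⟩ := hg
  have h := mat_inv g
  rw [Matrix.inv_def, Matrix.adjugate_fin_two] at h
  constructor <;> rw [h] <;>
    simp only [Matrix.smul_apply, Matrix.cons_val', Matrix.cons_val_zero, Matrix.cons_val_one,
      Matrix.head_cons, Matrix.head_fin_const, Matrix.empty_val', Matrix.cons_val_fin_one,
      Matrix.of_apply, smul_eq_mul, a1, a2] <;> ring

lemma anti_trace {g : GL2 ℓ} (hg : InNnsAnti δ g) : (mat g).trace = 0 := by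
  rw [Matrix.trace_fin_two, hg.1]; ring

lemma anti_det {g : GL2 ℓ} (hg : InNnsAnti δ g) :
    (mat g).det = -((mat g 0 0)^2 - δ * (mat g 1 0)^2) := by
  rw [Matrix.det_fin_two, hg.1, hg.2]; ring

lemma anti_not_scalar (hℓ : ℓ ≠ 2) {g : GL2 ℓ} (hg : InNnsAnti δ g) : ¬ IsScalar g := by
  intro hs
  obtain ⟨h1, h2, h3⟩ := scalar_entries hs
  have h00 : mat g 0 0 = 0 := by
    have := hg.1
    rw [h3] at this
    have h2' : (2 : ZMod ℓ) * mat g 0 0 = 0 := by linear_combination this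
    rcases mul_eq_zero.mp h2' with h | h
    · exact absurd h (two_ne hℓ)
    · exact h
  have : (mat g).det = 0 := by
    rw [Matrix.det_fin_two, h00, h1, hg.1, h00]; ring
  exact det_ne_zero g this

lemma cns_scalar_of_b_zero {g : GL2 ℓ} (hg : InCns δ g) (hb : mat g 1 0 = 0) :
    IsScalar g := by
  rw [isScalar_iff]
  exact ⟨by rw [hg.2, hb, mul_zero], hb, hg.1⟩

lemma cns_nonscalar_b_ne {g : GL2 ℓ} (hg : InCns δ g) (hs : ¬ IsScalar g) :
    mat g 1 0 ≠ 0 := fun hb => hs (cns_scalar_of_b_zero hg hb)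

lemma cns_comm {g h : GL2 ℓ} (hg : InCns δ g) (hh : InCns δ h) : g * h = h * g := by
  apply units_ext
  obtain ⟨a1, a2⟩ := hg; obtain ⟨b1, b2⟩ := hh
  rw [mat_mul, mat_mul]
  ext i j
  fin_cases i <;> fin_cases j <;>
    simp only [Fin.mk_zero, Fin.mk_one, Fin.isValue, Matrix.mul_apply, Fin.sum_univ_two,
      a1, a2, b1, b2] <;> ring

lemma nns_mul {g h : GL2 ℓ} (hg : InNns δ g) (hh : InNns δ h) : InNns δ (g * h) := by
  rcases hg with hg | hg <;> rcases hh with hh | hh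
  · exact Or.inl (cns_mul hg hh)
  · exact Or.inr (cns_mul_anti hg hh)
  · exact Or.inr (anti_mul_cns hg hh)
  · exact Or.inl (anti_mul_anti hg hh)

lemma nns_inv {g : GL2 ℓ} (hg : InNns δ g) : InNns δ g⁻¹ := by
  rcases hg with hg | hg
  · exact Or.inl (cns_inv hg)
  · exact Or.inr (anti_inv hg)

lemma nns_one : InNns δ (1 : GL2 ℓ) := Or.inl cns_one

/-- Centralizer lemma: anything commuting with a nonscalar C_ns element is in C_ns. -/
lemma cns_centralizer (hδ : ¬ IsSquare δ) {m h : GL2 ℓ} (hm : InCns δ m)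
    (hb : mat m 1 0 ≠ 0) (hcomm : h * m = m * h) : InCns δ h := by
  obtain ⟨a1, a2⟩ := hm
  have hmat : mat h * mat m = mat m * mat h := by
    rw [← mat_mul, ← mat_mul, hcomm]
  have e00 := congrFun (congrFun hmat 0) 0
  have e01 := congrFun (congrFun hmat 0) 1
  simp only [Matrix.mul_apply, Fin.sum_univ_two, a1, a2] at e00 e01
  constructor
  · -- h 1 1 = h 0 0, from e01 : h00 * (δ * m10) + h01 * m00 = m00 * h01 + δ * m10 * h11
    have : δ * mat m 1 0 * (mat h 0 0 - mat h 1 1) = 0 := by linear_combination e01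
    rcases mul_eq_zero.mp this with h' | h'
    · exact absurd h' (mul_ne_zero (delta_ne hδ) hb)
    · linear_combination -h'
  · -- h 0 1 = δ * h 1 0, from e00
    have : mat m 1 0 * (mat h 0 1 - δ * mat h 1 0) = 0 := by linear_combination e00
    rcases mul_eq_zero.mp this with h' | h'
    · exact absurd h' hb
    · linear_combination h'

/-- Normalizer lemma ("Lemma D"). -/
lemma cns_normalizer (hℓ : ℓ ≠ 2) (hδ : ¬ IsSquare δ) {m h : GL2 ℓ} (hm : InCns δ m)
    (hb : mat m 1 0 ≠ 0) (hconj : InCns δ (h * m * h⁻¹)) : InNns δ h := by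
  set m' := h * m * h⁻¹ with hm'
  have htr : (mat m').trace = (mat m).trace := trace_conj h m
  have hdt : (mat m').det = (mat m).det := det_conj h m
  rw [cns_trace hconj, cns_trace hm] at htr
  rw [cns_det hconj, cns_det hm] at hdt
  have ha : mat m' 0 0 = mat m 0 0 := by
    have h2 : (2 : ZMod ℓ) * (mat m' 0 0 - mat m 0 0) = 0 := by linear_combination htr
    rcases mul_eq_zero.mp h2 with h' | h'
    · exact absurd h' (two_ne hℓ)
    · linear_combination h'
  have hbb : (mat m' 1 0 - mat m 1 0) * (mat m' 1 0 + mat m 1 0) = 0 := by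
    have hδ0 : δ * ((mat m' 1 0)^2 - (mat m 1 0)^2) = 0 := by
      rw [ha] at hdt; linear_combination -hdt
    rcases mul_eq_zero.mp hδ0 with h' | h'
    · exact absurd h' (delta_ne hδ)
    · linear_combination h'
  have hmat : mat h * mat m = mat m' * mat h := by
    rw [← mat_mul, ← mat_mul]
    congr 1
    rw [hm']; group
  rcases mul_eq_zero.mp hbb with hk | hk
  · -- m' 1 0 = m 1 0 : h commutes with m
    have hk : mat m' 1 0 = mat m 1 0 := by linear_combination hk
    have h00 : mat m' 0 0 = mat m 0 0 := ha
    have h01 : mat m' 0 1 = mat m 0 1 := by rw [hconj.2, hk, hm.2]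
    have h11 : mat m' 1 1 = mat m 1 1 := by rw [hconj.1, hm.1, ha]
    have hmeq : m' = m := by
      apply units_ext
      ext i j
      fin_cases i <;> fin_cases j
      · exact h00
      · exact h01
      · exact hk
      · exact h11
    have hcomm : h * m = m * h := by
      calc h * m = (h * m * h⁻¹) * h := by group
        _ = m * h := by rw [← hm', hmeq]
    exact Or.inl (cns_centralizer hδ hm hb hcomm)
  · -- m' 1 0 = - m 1 0 : h anticommutes
    right
    have hk : mat m' 1 0 = - mat m 1 0 := by linear_combination hk
    have e00 := congrFun (congrFun hmat 0) 0
    have e01 := congrFun (congrFun hmat 0) 1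
    simp only [Matrix.mul_apply, Fin.sum_univ_two, hconj.1, hconj.2, hk, ha,
      hm.1, hm.2] at e00 e01
    constructor
    · have hz : δ * mat m 1 0 * (mat h 0 0 + mat h 1 1) = 0 := by linear_combination e01
      rcases mul_eq_zero.mp hz with h' | h'
      · exact absurd h' (mul_ne_zero (delta_ne hδ) hb)
      · linear_combination h'
    · have hz : mat m 1 0 * (mat h 0 1 + δ * mat h 1 0) = 0 := by linear_combination e00
      rcases mul_eq_zero.mp hz with h' | h'
      · exact absurd h' hb
      · linear_combination h'

lemma nns_conj_cns {w c : GL2 ℓ} (hw : InNns δ w) (hc : InCns δ c) :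
    InCns δ (w * c * w⁻¹) := by
  rcases hw with hw | hw
  · exact cns_mul (cns_mul hw hc) (cns_inv hw)
  · exact anti_mul_anti (anti_mul_cns hw hc) (anti_inv hw)

/-! ### quadratic character helpers -/

lemma chi_sq_eq_one {a : ZMod ℓ} (ha : a ≠ 0) :
    quadraticChar (ZMod ℓ) (a * a) = 1 := by
  rw [_root_.map_mul]
  rcases quadraticChar_dichotomy ha with h | h <;> rw [h] <;> norm_num

lemma euler_nonsquare (hℓ : ℓ ≠ 2) {x : ZMod ℓ} (hx : ¬ IsSquare x) : x ^ (ℓ / 2) = -1 := by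
  have hx0 : x ≠ 0 := fun h => hx ⟨0, by simp [h]⟩
  have hodd : Odd ℓ := (Fact.out : ℓ.Prime).odd_of_ne_two hℓ
  have h1 : x ^ (ℓ / 2) * x ^ (ℓ / 2) = 1 := by
    rw [← pow_add]
    have hhalf : ℓ / 2 + ℓ / 2 = ℓ - 1 := by
      obtain ⟨k, hk⟩ := hodd; omega
    rw [hhalf]
    exact ZMod.pow_card_sub_one_eq_one hx0
  rcases mul_self_eq_one_iff.mp h1 with h | h
  · exact absurd ((ZMod.euler_criterion ℓ hx0).mpr h) hx
  · exact h

lemma chi_det_neg_of_anti (hℓ : ℓ ≠ 2) {δ : ZMod ℓ} {X h : GL2 ℓ}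
    (hanti : InNnsAnti δ (X * h * X⁻¹)) (hdisc : ¬ IsSquare (disc h)) :
    quadraticChar (ZMod ℓ) (-(mat h).det) = -1 := by
  have h1 : disc h = disc (X * h * X⁻¹) := (disc_conj X h).symm
  have h2 : disc (X * h * X⁻¹) = (2:ZMod ℓ)^2 * (-(mat (X * h * X⁻¹)).det) := by
    unfold disc
    rw [anti_trace hanti]; ring
  rw [det_conj] at h2
  rw [h2] at h1
  rw [quadraticChar_neg_one_iff_not_isSquare]
  intro ⟨t, ht⟩
  apply hdisc
  rw [h1]
  exact ⟨2 * t, by rw [ht]; ring⟩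

lemma nonsquare_detneg_flip {a : ZMod ℓ} (h : quadraticChar (ZMod ℓ) (-a) = -1) :
    quadraticChar (ZMod ℓ) a = quadraticChar (ZMod ℓ) (-1) * -1 := by
  have h2 : a = (-1) * (-a) := by ring
  rw [h2, _root_.map_mul, h]

/-! ### conjugating a nonscalar with nonsquare discriminant into C_ns -/

/-- companion conjugation helper -/
lemma companion_helper (u : GL2 ℓ) (v0 v1 : ZMod ℓ)
    (hP : v0 * (mat u 1 0 * v0 + mat u 1 1 * v1) - v1 * (mat u 0 0 * v0 + mat u 0 1 * v1) ≠ 0) :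
    ∃ X : GL2 ℓ, mat (X * u * X⁻¹) =
      !![0, -(mat u).det; 1, (mat u).trace] := by
  have hdet : (!![v0, mat u 0 0 * v0 + mat u 0 1 * v1;
      v1, mat u 1 0 * v0 + mat u 1 1 * v1] : Matrix (Fin 2) (Fin 2) (ZMod ℓ)).det
      = v0 * (mat u 1 0 * v0 + mat u 1 1 * v1) - v1 * (mat u 0 0 * v0 + mat u 0 1 * v1) := by
    rw [Matrix.det_fin_two]
    simp only [Matrix.cons_val', Matrix.cons_val_zero, Matrix.cons_val_one, Matrix.head_cons,
      Matrix.head_fin_const, Matrix.empty_val', Matrix.cons_val_fin_one, Matrix.of_apply]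
    ring
  set P : Matrix (Fin 2) (Fin 2) (ZMod ℓ) := !![v0, mat u 0 0 * v0 + mat u 0 1 * v1;
      v1, mat u 1 0 * v0 + mat u 1 1 * v1] with hPdef
  have hdet' : IsUnit P.det := by
    rw [hdet]; exact isUnit_iff_ne_zero.mpr hP
  set U : GL2 ℓ := P.nonsingInvUnit hdet' with hU
  have hUval : (U : Matrix (Fin 2) (Fin 2) (ZMod ℓ)) = P := rfl
  refine ⟨U⁻¹, ?_⟩
  have hkey : mat u * P = P * !![0, -(mat u).det; 1, (mat u).trace] := by
    ext i j
    fin_cases i <;> fin_cases j <;>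
      simp only [Fin.mk_zero, Fin.mk_one, Fin.isValue, Matrix.mul_apply, Fin.sum_univ_two,
        hPdef, Matrix.cons_val', Matrix.cons_val_zero, Matrix.cons_val_one, Matrix.head_cons,
        Matrix.head_fin_const, Matrix.empty_val', Matrix.cons_val_fin_one, Matrix.of_apply,
        Matrix.det_fin_two, Matrix.trace_fin_two] <;> ring
  have hmatinv : mat U⁻¹ = P⁻¹ := by rw [mat_inv]; exact congrArg _ rfl
  rw [mat_mul, mat_mul, hmatinv]
  have hUU : mat (U⁻¹)⁻¹ = P := by rw [inv_inv]; exact hUval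
  rw [hUU]
  rw [Matrix.mul_assoc, hkey, ← Matrix.mul_assoc]
  rw [Matrix.nonsing_inv_mul P hdet', Matrix.one_mul]

lemma exists_companion (u : GL2 ℓ) (hns : ¬ IsScalar u) :
    ∃ X : GL2 ℓ, mat (X * u * X⁻¹) = !![0, -(mat u).det; 1, (mat u).trace] := by
  by_cases h10 : mat u 1 0 ≠ 0
  · apply companion_helper u 1 0
    simpa using h10
  · push_neg at h10
    by_cases h01 : mat u 0 1 ≠ 0
    · apply companion_helper u 0 1
      simpa using h01
    · push_neg at h01
      have hne : mat u 1 1 - mat u 0 0 ≠ 0 := by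
        intro h'
        apply hns
        rw [isScalar_iff]
        exact ⟨h01, h10, by linear_combination h'⟩
      apply companion_helper u 1 1
      rw [h10, h01]
      intro h'
      apply hne
      linear_combination h'

lemma exists_conj_cns (hℓ : ℓ ≠ 2) {δ : ZMod ℓ} (hδ : ¬ IsSquare δ) (u : GL2 ℓ)
    (hns : ¬ IsScalar u) (hdisc : ¬ IsSquare (disc u)) :
    ∃ X : GL2 ℓ, InCns δ (X * u * X⁻¹) ∧ ¬ IsScalar (X * u * X⁻¹) := by
  have h2 := two_ne hℓ
  have hd0 : disc u ≠ 0 := fun h => hdisc ⟨0, by simp [h]⟩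
  have hδ0 := delta_ne hδ
  -- find r with disc u = δ * r^2
  have hsq : IsSquare (disc u * δ⁻¹) := by
    have hx0 : disc u * δ⁻¹ ≠ 0 := mul_ne_zero hd0 (inv_ne_zero hδ0)
    rw [← quadraticChar_one_iff_isSquare hx0]
    have hmul : (disc u * δ⁻¹) * δ = disc u := by field_simp
    have h1 : quadraticChar (ZMod ℓ) ((disc u * δ⁻¹)) * quadraticChar (ZMod ℓ) δ
        = quadraticChar (ZMod ℓ) (disc u) := by rw [← _root_.map_mul, hmul]
    rw [quadraticChar_neg_one_iff_not_isSquare.mpr hδ,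
        quadraticChar_neg_one_iff_not_isSquare.mpr hdisc] at h1
    rcases quadraticChar_dichotomy hx0 with h | h
    · exact h
    · rw [h] at h1; norm_num at h1
  obtain ⟨r, hr⟩ := hsq
  have hr0 : r ≠ 0 := by
    intro h'
    rw [h', mul_zero] at hr
    exact mul_ne_zero hd0 (inv_ne_zero hδ0) hr
  have hdisc2 : ((mat u).trace)^2 - 4 * (mat u).det = δ * (r * r) := by
    have : disc u = ((mat u).trace)^2 - 4 * (mat u).det := rfl
    rw [← this]
    have h3 : disc u * δ⁻¹ * δ = (r * r) * δ := by rw [← hr]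
    field_simp at h3
    linear_combination h3
  set t := (mat u).trace with ht
  set d := (mat u).det with hd
  have hinv2 : (2 : ZMod ℓ) * (2 : ZMod ℓ)⁻¹ = 1 := mul_inv_cancel₀ h2
  set iv : ZMod ℓ := (2 : ZMod ℓ)⁻¹ with hiv
  have hb0 : r * iv ≠ 0 := mul_ne_zero hr0 (inv_ne_zero h2)
  have hdet_id : (t * iv) * (t * iv) - (δ * (r * iv)) * (r * iv) = d := by
    linear_combination (iv*iv) * hdisc2 + d*(2*iv+1)*hinv2
  have htr_id : (t * iv) + (t * iv) = t := by
    linear_combination t * hinv2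
  set M : Matrix (Fin 2) (Fin 2) (ZMod ℓ) := !![t * iv, δ * (r * iv); r * iv, t * iv] with hM
  have hM00 : M 0 0 = t * iv := rfl
  have hM01 : M 0 1 = δ * (r * iv) := rfl
  have hM10 : M 1 0 = r * iv := rfl
  have hM11 : M 1 1 = t * iv := rfl
  have hMdet : M.det = d := by
    rw [Matrix.det_fin_two, hM00, hM01, hM10, hM11]
    linear_combination hdet_id
  have hMtr : M.trace = t := by
    rw [Matrix.trace_fin_two, hM00, hM11]
    exact htr_id
  have hMdet' : IsUnit M.det := by
    rw [hMdet]
    exact isUnit_iff_ne_zero.mpr (det_ne_zero u)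
  set mu : GL2 ℓ := M.nonsingInvUnit hMdet' with hmu
  have hmuval : mat mu = M := rfl
  obtain ⟨X2, hX2⟩ := companion_helper mu 1 0
    (by rw [hmuval, hM10, hM00]
        intro h'
        apply hb0
        linear_combination h')
  obtain ⟨X1, hX1⟩ := exists_companion u hns
  have hsame : X1 * u * X1⁻¹ = X2 * mu * X2⁻¹ := by
    apply units_ext
    rw [hX1, hX2, hmuval, hMdet, hMtr]
  have heq : (X2⁻¹ * X1) * u * (X2⁻¹ * X1)⁻¹ = mu := by
    have h5 : X2⁻¹ * (X1 * u * X1⁻¹) * X2 = mu := by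
      rw [hsame]; group
    rw [← h5]; group
  refine ⟨X2⁻¹ * X1, ?_, ?_⟩
  · rw [heq]
    exact ⟨by rw [hmuval, hM11, hM00], by rw [hmuval, hM01, hM10]⟩
  · rw [heq]
    intro hsc
    obtain ⟨_, h10', _⟩ := scalar_entries hsc
    rw [hmuval, hM10] at h10'
    exact hb0 h10'

/-! ### power lemmas in the nonsplit Cartan -/

lemma u_matrix_sq (δ : ZMod ℓ) :
    (!![0, δ; 1, 0] : Matrix (Fin 2) (Fin 2) (ZMod ℓ)) * !![0, δ; 1, 0] = δ • 1 := by
  ext i j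
  fin_cases i <;> fin_cases j <;>
    simp [Matrix.mul_apply, Fin.sum_univ_two, Matrix.one_apply]

lemma u_matrix_pow_card (hℓ : ℓ ≠ 2) {δ : ZMod ℓ} (hδ : ¬ IsSquare δ) :
    (!![0, δ; 1, 0] : Matrix (Fin 2) (Fin 2) (ZMod ℓ)) ^ ℓ = - !![0, δ; 1, 0] := by
  have hodd : Odd ℓ := (Fact.out : ℓ.Prime).odd_of_ne_two hℓ
  have hl : ℓ = 2 * (ℓ / 2) + 1 := by obtain ⟨k, hk⟩ := hodd; omega
  set Um : Matrix (Fin 2) (Fin 2) (ZMod ℓ) := !![0, δ; 1, 0] with hUm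
  calc Um ^ ℓ = Um ^ (2 * (ℓ / 2) + 1) := by rw [← hl]
    _ = (Um ^ 2) ^ (ℓ / 2) * Um := by rw [pow_succ, pow_mul]
    _ = (δ • (1 : Matrix (Fin 2) (Fin 2) (ZMod ℓ))) ^ (ℓ / 2) * Um := by
        rw [pow_two, u_matrix_sq]
    _ = (δ ^ (ℓ / 2)) • Um := by
        rw [smul_pow, one_pow, Matrix.smul_mul, Matrix.one_mul]
    _ = - Um := by rw [euler_nonsquare hℓ hδ, neg_smul, one_smul]

lemma cns_split {δ : ZMod ℓ} {y : GL2 ℓ} (hy : InCns δ y) :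
    mat y = (mat y 0 0) • 1 + (mat y 1 0) • !![0, δ; 1, 0] := by
  ext i j
  fin_cases i <;> fin_cases j <;>
    simp only [Fin.mk_zero, Fin.mk_one, Fin.isValue, Matrix.add_apply, Matrix.smul_apply,
      Matrix.one_apply, Matrix.cons_val', Matrix.cons_val_zero, Matrix.cons_val_one,
      Matrix.head_cons, Matrix.head_fin_const, Matrix.empty_val', Matrix.cons_val_fin_one,
      Matrix.of_apply, smul_eq_mul] <;>
    simp [hy.1, hy.2, mul_comm]

lemma smul_prod_id (a b δ : ZMod ℓ) :
    ((a • 1 - b • !![0, δ; 1, 0]) * (a • 1 + b • !![0, δ; 1, 0])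
      : Matrix (Fin 2) (Fin 2) (ZMod ℓ)) = (a * a - δ * (b * b)) • 1 := by
  ext i j
  fin_cases i <;> fin_cases j <;>
    simp only [Fin.mk_zero, Fin.mk_one, Fin.isValue, Matrix.mul_apply, Fin.sum_univ_two,
      Matrix.add_apply, Matrix.sub_apply, Matrix.smul_apply, Matrix.one_apply,
      Matrix.cons_val', Matrix.cons_val_zero, Matrix.cons_val_one, Matrix.head_cons,
      Matrix.head_fin_const, Matrix.empty_val', Matrix.cons_val_fin_one, Matrix.of_apply,
      smul_eq_mul, if_true, if_false] <;>
    simp <;> ring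

lemma cns_pow_card (hℓ : ℓ ≠ 2) {δ : ZMod ℓ} (hδ : ¬ IsSquare δ) {y : GL2 ℓ}
    (hy : InCns δ y) :
    (mat y) ^ ℓ = (mat y 0 0) • 1 - (mat y 1 0) • !![0, δ; 1, 0] := by
  have hsplit := cns_split hy
  set a := mat y 0 0
  set b := mat y 1 0
  set Um : Matrix (Fin 2) (Fin 2) (ZMod ℓ) := !![0, δ; 1, 0] with hUm
  have hcomm : Commute (a • (1 : Matrix (Fin 2) (Fin 2) (ZMod ℓ))) (b • Um) :=
    ((Commute.one_left Um).smul_left a).smul_right b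
  rw [hsplit]
  rw [add_pow_char_of_commute ℓ hcomm]
  rw [smul_pow, smul_pow, one_pow, ZMod.pow_card, ZMod.pow_card]
  rw [hUm, u_matrix_pow_card hℓ hδ]
  rw [smul_neg, sub_eq_add_neg]

lemma cns_pow_card_add_one (hℓ : ℓ ≠ 2) {δ : ZMod ℓ} (hδ : ¬ IsSquare δ) {y : GL2 ℓ}
    (hy : InCns δ y) :
    (mat y) ^ (ℓ + 1) = ((mat y).det) • 1 := by
  have hdet : (mat y).det = mat y 0 0 * mat y 0 0 - δ * (mat y 1 0 * mat y 1 0) := by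
    rw [Matrix.det_fin_two, hy.1, hy.2]; ring
  have hsplit := cns_split hy
  generalize ha : mat y 0 0 = a at hsplit hdet
  generalize hb : mat y 1 0 = b at hsplit hdet
  rw [pow_succ, cns_pow_card hℓ hδ hy, ha, hb, hdet, hsplit]
  exact smul_prod_id a b δ

lemma cns_pow_card_sq_sub_one (hℓ : ℓ ≠ 2) {δ : ZMod ℓ} (hδ : ¬ IsSquare δ) {y : GL2 ℓ}
    (hy : InCns δ y) :
    (mat y) ^ (ℓ ^ 2 - 1) = 1 := by
  have hge := (Fact.out : ℓ.Prime).two_le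
  have hl : ℓ ^ 2 - 1 = (ℓ + 1) * (ℓ - 1) := by
    obtain ⟨k, rfl⟩ : ∃ k, ℓ = k + 1 := ⟨ℓ - 1, by omega⟩
    have e1 : (k+1)^2 = k*k + 2*k + 1 := by ring
    have e2 : (k+1+1)*((k+1)-1) = k*k + 2*k := by
      simp [Nat.add_sub_cancel]; ring
    omega
  rw [hl, pow_mul, cns_pow_card_add_one hℓ hδ hy, smul_pow, one_pow,
    ZMod.pow_card_sub_one_eq_one (det_ne_zero y), one_smul]

lemma cns_pow_half (hℓ : ℓ ≠ 2) {δ : ZMod ℓ} (hδ : ¬ IsSquare δ) {y : GL2 ℓ}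
    (hy : InCns δ y) (hdet : ¬ IsSquare ((mat y).det)) :
    (mat y) ^ ((ℓ ^ 2 - 1) / 2) = - 1 := by
  have hodd : Odd ℓ := (Fact.out : ℓ.Prime).odd_of_ne_two hℓ
  have hl : (ℓ ^ 2 - 1) / 2 = (ℓ + 1) * (ℓ / 2) := by
    obtain ⟨k, rfl⟩ := hodd
    have e1 : (2*k+1)^2 = 4*(k*k)+4*k+1 := by ring
    have e2 : (2*k+1+1)*((2*k+1)/2) = 2*(k*k)+2*k := by
      have h3 : (2*k+1)/2 = k := by omega
      rw [h3]; ring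
    omega
  rw [hl, pow_mul, cns_pow_card_add_one hℓ hδ hy, smul_pow, one_pow,
    euler_nonsquare hℓ hdet, neg_smul, one_smul]

/-! ### unit-level transport -/

lemma conj_pow (X g : GL2 ℓ) (n : ℕ) : (X * g * X⁻¹) ^ n = X * g ^ n * X⁻¹ := by
  induction n with
  | zero => group
  | succ n ih => rw [pow_succ, ih, pow_succ]; group

lemma neg_one_unit_val : mat (-1 : GL2 ℓ) = -1 := by
  show ((-(1 : GL2 ℓ) : GL2 ℓ) : Matrix (Fin 2) (Fin 2) (ZMod ℓ)) = -1
  rw [Units.val_neg, Units.val_one]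

lemma mat_pow (g : GL2 ℓ) (n : ℕ) : mat (g ^ n) = (mat g) ^ n :=
  Units.val_pow_eq_pow_val _ _

lemma pow_card_sq_sub_one_of_conj (hℓ : ℓ ≠ 2) {δ : ZMod ℓ} (hδ : ¬ IsSquare δ)
    {g X : GL2 ℓ} (hy : InCns δ (X * g * X⁻¹)) : g ^ (ℓ ^ 2 - 1) = 1 := by
  have h1 : (X * g * X⁻¹) ^ (ℓ ^ 2 - 1) = 1 := by
    apply units_ext
    rw [mat_pow, cns_pow_card_sq_sub_one hℓ hδ hy, mat_one]
  rw [conj_pow] at h1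
  calc g ^ (ℓ^2-1) = X⁻¹ * (X * g ^ (ℓ^2-1) * X⁻¹) * X := by group
    _ = X⁻¹ * 1 * X := by rw [h1]
    _ = 1 := by group

lemma pow_half_of_conj (hℓ : ℓ ≠ 2) {δ : ZMod ℓ} (hδ : ¬ IsSquare δ)
    {g X : GL2 ℓ} (hy : InCns δ (X * g * X⁻¹)) (hdet : ¬ IsSquare ((mat g).det)) :
    g ^ ((ℓ ^ 2 - 1) / 2) = -1 := by
  have hdet' : ¬ IsSquare ((mat (X * g * X⁻¹)).det) := by rwa [det_conj]
  have h1 : (X * g * X⁻¹) ^ ((ℓ ^ 2 - 1)/2) = -1 := by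
    apply units_ext
    rw [mat_pow, cns_pow_half hℓ hδ hy hdet', neg_one_unit_val]
  rw [conj_pow] at h1
  have h2 : g ^ ((ℓ^2-1)/2) = X⁻¹ * (-1) * X := by
    calc g ^ ((ℓ^2-1)/2) = X⁻¹ * (X * g ^ ((ℓ^2-1)/2) * X⁻¹) * X := by group
      _ = X⁻¹ * (-1) * X := by rw [h1]
  rw [h2]
  apply units_ext
  rw [neg_one_unit_val, mat_mul, mat_mul, neg_one_unit_val]
  calc mat X⁻¹ * (-1 : Matrix (Fin 2) (Fin 2) (ZMod ℓ)) * mat X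
      = -(mat X⁻¹ * mat X) := by noncomm_ring
    _ = -1 := by rw [mat_inv_mul]

/-! ### subgroups -/

lemma conj_mul (X a b : GL2 ℓ) : (X*a*X⁻¹)*(X*b*X⁻¹) = X*(a*b)*X⁻¹ := by group

lemma conj_inj {X a b : GL2 ℓ} (h : X*a*X⁻¹ = X*b*X⁻¹) : a = b := by
  calc a = X⁻¹*(X*a*X⁻¹)*X := by group
    _ = X⁻¹*(X*b*X⁻¹)*X := by rw [h]
    _ = b := by group

def cnsSub (δ : ZMod ℓ) (X : GL2 ℓ) : Subgroup (GL2 ℓ) where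
  carrier := {g | InCns δ (X * g * X⁻¹)}
  one_mem' := by
    show InCns δ (X * 1 * X⁻¹)
    rw [show X * 1 * X⁻¹ = (1 : GL2 ℓ) by group]
    exact cns_one
  mul_mem' := by
    intro a b ha hb
    show InCns δ (X * (a*b) * X⁻¹)
    rw [← conj_mul]
    exact cns_mul ha hb
  inv_mem' := by
    intro a ha
    show InCns δ (X * a⁻¹ * X⁻¹)
    rw [show X * a⁻¹ * X⁻¹ = (X * a * X⁻¹)⁻¹ by group]
    exact cns_inv ha

lemma mem_cnsSub {δ : ZMod ℓ} {X g : GL2 ℓ} :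
    g ∈ cnsSub δ X ↔ InCns δ (X * g * X⁻¹) := Iff.rfl

def nnsSub (δ : ZMod ℓ) (X : GL2 ℓ) : Subgroup (GL2 ℓ) where
  carrier := {g | InNns δ (X * g * X⁻¹)}
  one_mem' := by
    show InNns δ (X * 1 * X⁻¹)
    rw [show X * 1 * X⁻¹ = (1 : GL2 ℓ) by group]
    exact nns_one
  mul_mem' := by
    intro a b ha hb
    show InNns δ (X * (a*b) * X⁻¹)
    rw [← conj_mul]
    exact nns_mul ha hb
  inv_mem' := by
    intro a ha
    show InNns δ (X * a⁻¹ * X⁻¹)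
    rw [show X * a⁻¹ * X⁻¹ = (X * a * X⁻¹)⁻¹ by group]
    exact nns_inv ha

lemma mem_nnsSub {δ : ZMod ℓ} {X g : GL2 ℓ} :
    g ∈ nnsSub δ X ↔ InNns δ (X * g * X⁻¹) := Iff.rfl

lemma scalar_mul {a b : GL2 ℓ} (ha : IsScalar a) (hb : IsScalar b) : IsScalar (a * b) := by
  obtain ⟨c, hc⟩ := ha; obtain ⟨c', hc'⟩ := hb
  refine ⟨c * c', ?_⟩
  rw [mat_mul, hc, hc', Matrix.smul_mul, Matrix.mul_smul, Matrix.one_mul, smul_smul]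

lemma scalar_coeff_ne {a : GL2 ℓ} {c : ZMod ℓ} (hc : mat a = c • 1) : c ≠ 0 := by
  intro h
  apply det_ne_zero a
  rw [hc, h]
  simp

lemma scalar_inv {a : GL2 ℓ} (ha : IsScalar a) : IsScalar a⁻¹ := by
  obtain ⟨c, hc⟩ := ha
  have hc0 : c ≠ 0 := scalar_coeff_ne hc
  refine ⟨c⁻¹, ?_⟩
  have h1 : (c • (1:Matrix (Fin 2) (Fin 2) (ZMod ℓ))) * (c⁻¹ • 1) = 1 := by
    rw [Matrix.smul_mul, Matrix.mul_smul, Matrix.one_mul, smul_smul, mul_inv_cancel₀ hc0,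
      one_smul]
  calc mat a⁻¹ = mat a⁻¹ * ((c • 1) * (c⁻¹ • 1)) := by rw [h1, Matrix.mul_one]
    _ = (mat a⁻¹ * mat a) * (c⁻¹ • 1) := by rw [← hc, Matrix.mul_assoc]
    _ = c⁻¹ • 1 := by rw [mat_inv_mul, Matrix.one_mul]

def scalSub (ℓ : ℕ) [Fact ℓ.Prime] : Subgroup (GL2 ℓ) where
  carrier := {g | IsScalar g}
  one_mem' := ⟨1, by rw [mat_one, one_smul]⟩
  mul_mem' := fun ha hb => scalar_mul ha hb
  inv_mem' := fun ha => scalar_inv ha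

lemma mem_scalSub {g : GL2 ℓ} : g ∈ scalSub ℓ ↔ IsScalar g := Iff.rfl

lemma scal_le_cns {δ : ZMod ℓ} (X : GL2 ℓ) : scalSub ℓ ≤ cnsSub δ X :=
  fun _ hg => scalar_cns (scalar_conj hg)

lemma cns_le_nns {δ : ZMod ℓ} (X : GL2 ℓ) : cnsSub δ X ≤ nnsSub δ X :=
  fun _ hg => Or.inl hg

def scalHom (ℓ : ℕ) [Fact ℓ.Prime] : (ZMod ℓ)ˣ →* GL2 ℓ :=
  Units.map (algebraMap (ZMod ℓ) (Matrix (Fin 2) (Fin 2) (ZMod ℓ))).toMonoidHom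

lemma mat_scalHom (c : (ZMod ℓ)ˣ) : mat (scalHom ℓ c) = (c : ZMod ℓ) • 1 := by
  show (algebraMap (ZMod ℓ) (Matrix (Fin 2) (Fin 2) (ZMod ℓ))) (c : ZMod ℓ) = _
  rw [Algebra.algebraMap_eq_smul_one]

lemma scalHom_inj : Function.Injective (scalHom ℓ) := by
  intro c c' h
  have h2 : mat (scalHom ℓ c) = mat (scalHom ℓ c') := by rw [h]
  rw [mat_scalHom, mat_scalHom] at h2
  have := congrFun (congrFun h2 0) 0
  simp [Matrix.one_apply] at this
  exact Units.ext this

lemma card_units_zmod : Nat.card (ZMod ℓ)ˣ = ℓ - 1 := by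
  rw [Nat.card_eq_fintype_card, ZMod.card_units_eq_totient,
    Nat.totient_prime (Fact.out : ℓ.Prime)]

/-- the scalar subgroup has ℓ - 1 elements -/
lemma card_scalSub : Nat.card (scalSub ℓ) = ℓ - 1 := by
  have hrange : (scalHom ℓ).range = scalSub ℓ := by
    ext g
    constructor
    · rintro ⟨c, rfl⟩
      exact ⟨c, mat_scalHom c⟩
    · rintro ⟨c, hc⟩
      have hc0 : c ≠ 0 := scalar_coeff_ne hc
      refine ⟨Units.mk0 c hc0, ?_⟩
      apply units_ext
      rw [mat_scalHom]
      exact hc.symm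
  have h1 : Nat.card (ZMod ℓ)ˣ = Nat.card (scalHom ℓ).range :=
    Nat.card_congr (MonoidHom.ofInjective scalHom_inj).toEquiv
  rw [hrange] at h1
  rw [← h1, card_units_zmod]

/-! ### finsets -/

noncomputable def fsub (K : Subgroup (GL2 ℓ)) : Finset (GL2 ℓ) :=
  @Finset.filter _ (· ∈ K) (Classical.decPred _) Finset.univ

lemma mem_fsub {K : Subgroup (GL2 ℓ)} {g : GL2 ℓ} : g ∈ fsub K ↔ g ∈ K := by
  classical
  unfold fsub
  rw [Finset.filter_congr_decidable]
  simp

lemma card_fsub (K : Subgroup (GL2 ℓ)) : (fsub K).card = Nat.card K := by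
  classical
  unfold fsub
  rw [Finset.filter_congr_decidable, Nat.card_eq_fintype_card, Fintype.card_subtype]

lemma fsub_mono {K K' : Subgroup (GL2 ℓ)} (h : K ≤ K') : fsub K ⊆ fsub K' := by
  intro g hg
  rw [mem_fsub] at *
  exact h hg

def covP (δ : ZMod ℓ) (X : GL2 ℓ) (H : Subgroup (GL2 ℓ)) (y : GL2 ℓ) : Prop :=
  ∃ h, h ∈ H ∧ h*y*h⁻¹ ∈ H ∧ InCns δ (X*(h*y*h⁻¹)*X⁻¹) ∧ ¬IsScalar (h*y*h⁻¹)

noncomputable def covFin (δ : ZMod ℓ) (X : GL2 ℓ) (H : Subgroup (GL2 ℓ)) : Finset (GL2 ℓ) :=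
  @Finset.filter _ (covP δ X H) (Classical.decPred _) Finset.univ

lemma mem_covFin {δ : ZMod ℓ} {X : GL2 ℓ} {H : Subgroup (GL2 ℓ)} {y : GL2 ℓ} :
    y ∈ covFin δ X H ↔ covP δ X H y := by
  classical
  unfold covFin
  rw [Finset.filter_congr_decidable]
  simp

/-! ### the counting identity -/

lemma AmS_mem {δ : ZMod ℓ} {X : GL2 ℓ} {H : Subgroup (GL2 ℓ)} {g : GL2 ℓ} :
    g ∈ fsub (cnsSub δ X ⊓ H) \ fsub (scalSub ℓ ⊓ H) ↔
      (g ∈ H ∧ InCns δ (X*g*X⁻¹) ∧ ¬ IsScalar g) := by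
  rw [Finset.mem_sdiff, mem_fsub, mem_fsub, Subgroup.mem_inf, Subgroup.mem_inf,
    mem_cnsSub, mem_scalSub]
  constructor
  · rintro ⟨⟨h1, h2⟩, h3⟩
    exact ⟨h2, h1, fun hs => h3 ⟨hs, h2⟩⟩
  · rintro ⟨h1, h2, h3⟩
    exact ⟨⟨h2, h1⟩, fun hs => h3 hs.1⟩

lemma count_eq (hℓ : ℓ ≠ 2) {δ : ZMod ℓ} (hδ : ¬ IsSquare δ)
    (H : Subgroup (GL2 ℓ)) (X : GL2 ℓ) :
    (covFin δ X H).card * (fsub (nnsSub δ X ⊓ H)).card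
      = (fsub H).card * (fsub (cnsSub δ X ⊓ H) \ fsub (scalSub ℓ ⊓ H)).card := by
  classical
  set AmS := fsub (cnsSub δ X ⊓ H) \ fsub (scalSub ℓ ⊓ H) with hAmS
  set P : Finset (GL2 ℓ × GL2 ℓ) := Finset.filter
    (fun p : GL2 ℓ × GL2 ℓ => p.1 ∈ H ∧ (p.1*p.2*p.1⁻¹) ∈ H ∧
      InCns δ (X*(p.1*p.2*p.1⁻¹)*X⁻¹) ∧ ¬IsScalar (p.1*p.2*p.1⁻¹)) Finset.univ with hP
  have hmemP : ∀ p : GL2 ℓ × GL2 ℓ, p ∈ P ↔ (p.1 ∈ H ∧ (p.1*p.2*p.1⁻¹) ∈ H ∧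
      InCns δ (X*(p.1*p.2*p.1⁻¹)*X⁻¹) ∧ ¬IsScalar (p.1*p.2*p.1⁻¹)) := by
    intro p
    rw [hP, Finset.mem_filter]
    simp
  -- first count
  have hcount1 : P.card = (fsub H).card * AmS.card := by
    rw [Finset.card_eq_sum_card_fiberwise (f := Prod.fst) (t := fsub H)
      (fun p hp => mem_fsub.mpr ((hmemP p).mp hp).1)]
    rw [Finset.sum_congr rfl (fun h hh => ?_), Finset.sum_const, smul_eq_mul]
    apply Finset.card_bij (fun p _ => p.1 * p.2 * p.1⁻¹)
    · rintro p hp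
      rw [Finset.mem_filter] at hp
      obtain ⟨hp1, hp2⟩ := hp
      obtain ⟨q1, q2, q3, q4⟩ := (hmemP p).mp hp1
      rw [AmS_mem]
      exact ⟨q2, q3, q4⟩
    · rintro p hp q hq heq
      rw [Finset.mem_filter] at hp hq
      have h1 : p.1 = h := hp.2
      have h2 : q.1 = h := hq.2
      rw [h1, h2] at heq
      have : p.2 = q.2 := by
        apply conj_inj (X := h)
        exact heq
      exact Prod.ext (h1.trans h2.symm) this
    · intro x hx
      rw [AmS_mem] at hx
      obtain ⟨hx1, hx2, hx3⟩ := hx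
      refine ⟨(h, h⁻¹ * x * h), ?_, by group⟩
      rw [Finset.mem_filter]
      have hh' : h ∈ H := mem_fsub.mp hh
      have hxx : h * (h⁻¹ * x * h) * h⁻¹ = x := by group
      constructor
      · rw [hmemP]
        refine ⟨hh', ?_, ?_, ?_⟩ <;> rw [hxx]
        · exact hx1
        · exact hx2
        · exact hx3
      · rfl
  -- second count
  have hcount2 : P.card = (covFin δ X H).card * (fsub (nnsSub δ X ⊓ H)).card := by
    rw [Finset.card_eq_sum_card_fiberwise (f := Prod.snd) (t := covFin δ X H)
      (fun p hp => by
        rw [Finset.mem_coe, mem_covFin]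
        obtain ⟨q1, q2, q3, q4⟩ := (hmemP p).mp hp
        exact ⟨p.1, q1, q2, q3, q4⟩)]
    rw [Finset.sum_congr rfl (fun y hy => ?_), Finset.sum_const, smul_eq_mul]
    obtain ⟨h₀, hh₀, hm₀, hc₀, hs₀⟩ := mem_covFin.mp hy
    set m : GL2 ℓ := X*(h₀*y*h₀⁻¹)*X⁻¹ with hm
    have hmb : mat m 1 0 ≠ 0 := by
      apply cns_nonscalar_b_ne hc₀
      intro hsc
      exact hs₀ (scalar_conj_iff.mp hsc)
    apply Finset.card_bij (fun p _ => p.1 * h₀⁻¹)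
    · rintro p hp
      rw [Finset.mem_filter] at hp
      obtain ⟨hp1, hp2⟩ := hp
      obtain ⟨q1, q2, q3, q4⟩ := (hmemP p).mp hp1
      rw [mem_fsub, Subgroup.mem_inf, mem_nnsSub]
      constructor
      · -- InNns δ (X*(p.1*h₀⁻¹)*X⁻¹)
        apply cns_normalizer hℓ hδ hc₀ hmb
        rw [conj_conj]
        have : (p.1 * h₀⁻¹) * (h₀*y*h₀⁻¹) * (p.1*h₀⁻¹)⁻¹ = p.1*p.2*p.1⁻¹ := by
          rw [hp2]; group
        rw [this]
        exact q3
      · exact mul_mem q1 (inv_mem hh₀)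
    · rintro p hp q hq heq
      rw [Finset.mem_filter] at hp hq
      have : p.1 = q.1 := by
        have := mul_right_cancel heq
        exact this
      exact Prod.ext this (hp.2.trans hq.2.symm)
    · intro n hn
      rw [mem_fsub, Subgroup.mem_inf, mem_nnsSub] at hn
      refine ⟨(n * h₀, y), ?_, by group⟩
      rw [Finset.mem_filter]
      have hw : (n*h₀)*y*(n*h₀)⁻¹ = n*(h₀*y*h₀⁻¹)*n⁻¹ := by group
      constructor
      · rw [hmemP]
        refine ⟨mul_mem hn.2 hh₀, ?_, ?_, ?_⟩
        · rw [hw]; exact mul_mem (mul_mem hn.2 hm₀) (inv_mem hn.2)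
        · rw [hw, ← conj_conj]
          exact nns_conj_cns hn.1 hc₀
        · rw [hw]
          intro hsc
          have : IsScalar (h₀*y*h₀⁻¹) := by
            rw [show h₀*y*h₀⁻¹ = n⁻¹ * (n*(h₀*y*h₀⁻¹)*n⁻¹) * n⁻¹⁻¹ by group]
            exact scalar_conj hsc
          exact hs₀ this
      · rfl
  rw [← hcount1, ← hcount2]

lemma nns_eq_cns_of_noanti {δ : ZMod ℓ} {X : GL2 ℓ} {H : Subgroup (GL2 ℓ)}
    (hna : ∀ h ∈ H, ¬ InNnsAnti δ (X*h*X⁻¹)) :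
    nnsSub δ X ⊓ H = cnsSub δ X ⊓ H := by
  ext g
  rw [Subgroup.mem_inf, Subgroup.mem_inf, mem_nnsSub, mem_cnsSub]
  constructor
  · rintro ⟨h1 | h1, h2⟩
    · exact ⟨h1, h2⟩
    · exact absurd h1 (hna g h2)
  · rintro ⟨h1, h2⟩
    exact ⟨Or.inl h1, h2⟩

lemma nns_card_le {δ : ZMod ℓ} {X : GL2 ℓ} {H : Subgroup (GL2 ℓ)} :
    (fsub (nnsSub δ X ⊓ H)).card ≤ 2 * (fsub (cnsSub δ X ⊓ H)).card := by
  classical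
  by_cases hex : ∃ n₁ ∈ fsub (nnsSub δ X ⊓ H), InNnsAnti δ (X*n₁*X⁻¹)
  · obtain ⟨n₁, hn₁, hanti₁⟩ := hex
    rw [mem_fsub, Subgroup.mem_inf] at hn₁
    have hsub : fsub (nnsSub δ X ⊓ H) ⊆
        fsub (cnsSub δ X ⊓ H) ∪ (fsub (cnsSub δ X ⊓ H)).image (· * n₁) := by
      intro n hn
      rw [mem_fsub, Subgroup.mem_inf, mem_nnsSub] at hn
      rcases hn.1 with hc | ha
      · exact Finset.mem_union_left _ (by rw [mem_fsub, Subgroup.mem_inf]; exact ⟨hc, hn.2⟩)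
      · apply Finset.mem_union_right
        rw [Finset.mem_image]
        refine ⟨n * n₁⁻¹, ?_, by group⟩
        rw [mem_fsub, Subgroup.mem_inf, mem_cnsSub]
        constructor
        · rw [show X*(n*n₁⁻¹)*X⁻¹ = (X*n*X⁻¹) * (X*n₁*X⁻¹)⁻¹ by group]
          exact anti_mul_anti ha (anti_inv hanti₁)
        · exact mul_mem hn.2 (inv_mem hn₁.2)
    calc (fsub (nnsSub δ X ⊓ H)).card
        ≤ (fsub (cnsSub δ X ⊓ H) ∪ (fsub (cnsSub δ X ⊓ H)).image (· * n₁)).card :=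
          Finset.card_le_card hsub
      _ ≤ (fsub (cnsSub δ X ⊓ H)).card + ((fsub (cnsSub δ X ⊓ H)).image (· * n₁)).card :=
          Finset.card_union_le _ _
      _ ≤ (fsub (cnsSub δ X ⊓ H)).card + (fsub (cnsSub δ X ⊓ H)).card :=
          Nat.add_le_add_left (Finset.card_image_le) _
      _ = 2 * (fsub (cnsSub δ X ⊓ H)).card := by ring
  · push_neg at hex
    have : fsub (nnsSub δ X ⊓ H) ⊆ fsub (cnsSub δ X ⊓ H) := by
      intro n hn
      have hn' := hn
      rw [mem_fsub, Subgroup.mem_inf, mem_nnsSub] at hn'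
      rcases hn'.1 with hc | ha
      · rw [mem_fsub, Subgroup.mem_inf]; exact ⟨hc, hn'.2⟩
      · exact absurd ha (hex n hn)
    calc (fsub (nnsSub δ X ⊓ H)).card ≤ (fsub (cnsSub δ X ⊓ H)).card :=
        Finset.card_le_card this
      _ ≤ 2 * (fsub (cnsSub δ X ⊓ H)).card := by omega

lemma cov_subset {δ : ZMod ℓ} {X : GL2 ℓ} {H : Subgroup (GL2 ℓ)} :
    covFin δ X H ⊆ fsub H \ fsub (scalSub ℓ ⊓ H) := by
  intro y hy
  obtain ⟨h, hh, hm, hc, hs⟩ := mem_covFin.mp hy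
  have hyH : y ∈ H := by
    rw [show y = h⁻¹ * (h*y*h⁻¹) * h by group]
    exact mul_mem (mul_mem (inv_mem hh) hm) hh
  rw [Finset.mem_sdiff, mem_fsub, mem_fsub, Subgroup.mem_inf]
  refine ⟨hyH, fun hsc => hs (scalar_conj hsc.1)⟩

lemma cov_disjoint (hδ : ¬ IsSquare δ) {X₀ X₁ x₁ : GL2 ℓ} {H : Subgroup (GL2 ℓ)}
    (hx₁H : x₁ ∈ H) (hx₁c : InCns δ (X₁*x₁*X₁⁻¹)) (hx₁s : ¬ IsScalar x₁)
    (hx₁cov : x₁ ∉ covFin δ X₀ H) :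
    Disjoint (covFin δ X₀ H) (covFin δ X₁ H) := by
  rw [Finset.disjoint_left]
  intro y hy₀ hy₁
  obtain ⟨h, hh, hmH, hc, hs⟩ := mem_covFin.mp hy₀
  obtain ⟨h', hh', hmH', hc', hs'⟩ := mem_covFin.mp hy₁
  apply hx₁cov
  rw [mem_covFin]
  set z := h * h'⁻¹ with hz
  set c : GL2 ℓ := h*y*h⁻¹ with hcdef
  set c' : GL2 ℓ := h'*y*h'⁻¹ with hc'def
  have hzc : z * c' * z⁻¹ = c := by rw [hz, hcdef, hc'def]; group
  -- x₁ commutes with c'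
  have hcomm1 : x₁ * c' = c' * x₁ := by
    apply conj_inj (X := X₁)
    rw [show X₁*(x₁*c')*X₁⁻¹ = (X₁*x₁*X₁⁻¹)*(X₁*c'*X₁⁻¹) by group,
      show X₁*(c'*x₁)*X₁⁻¹ = (X₁*c'*X₁⁻¹)*(X₁*x₁*X₁⁻¹) by group]
    exact cns_comm hx₁c hc'
  -- hence z*x₁*z⁻¹ commutes with c
  have hcomm2 : (z*x₁*z⁻¹) * c = c * (z*x₁*z⁻¹) := by
    rw [← hzc]
    calc (z*x₁*z⁻¹) * (z*c'*z⁻¹) = z*(x₁*c')*z⁻¹ := by group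
      _ = z*(c'*x₁)*z⁻¹ := by rw [hcomm1]
      _ = (z*c'*z⁻¹) * (z*x₁*z⁻¹) := by group
  -- so z*x₁*z⁻¹ is in the X₀-torus
  have hmb : mat (X₀*c*X₀⁻¹) 1 0 ≠ 0 := by
    apply cns_nonscalar_b_ne hc
    intro hsc
    exact hs (scalar_conj_iff.mp hsc)
  have hw : InCns δ (X₀*(z*x₁*z⁻¹)*X₀⁻¹) := by
    apply cns_centralizer hδ hc hmb
    rw [conj_mul, conj_mul, hcomm2]
  refine ⟨z, mul_mem hh (inv_mem hh'), ?_, hw, ?_⟩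
  · exact mul_mem (mul_mem (mul_mem hh (inv_mem hh')) hx₁H)
      (inv_mem (mul_mem hh (inv_mem hh')))
  · intro hsc
    apply hx₁s
    rw [show x₁ = z⁻¹ * (z*x₁*z⁻¹) * z⁻¹⁻¹ by group]
    exact scalar_conj hsc

/-! ### torus structure lemmas -/

lemma torus_comm {δ : ZMod ℓ} {X u v : GL2 ℓ} (hu : InCns δ (X*u*X⁻¹))
    (hv : InCns δ (X*v*X⁻¹)) : u * v = v * u := by
  apply conj_inj (X := X)
  rw [show X*(u*v)*X⁻¹ = (X*u*X⁻¹)*(X*v*X⁻¹) by group,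
    show X*(v*u)*X⁻¹ = (X*v*X⁻¹)*(X*u*X⁻¹) by group]
  exact cns_comm hu hv

/-- 2x2 Cayley-Hamilton -/
lemma ch2 (M : Matrix (Fin 2) (Fin 2) (ZMod ℓ)) :
    M * M = M.trace • M - M.det • 1 := by
  ext i j
  fin_cases i <;> fin_cases j <;>
    simp only [Fin.mk_zero, Fin.mk_one, Fin.isValue, Matrix.mul_apply, Fin.sum_univ_two,
      Matrix.sub_apply, Matrix.smul_apply, Matrix.one_apply, Matrix.trace_fin_two,
      Matrix.det_fin_two, smul_eq_mul, if_true, if_false] <;>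
    simp <;> ring

lemma trace_zero_of_sq_scalar {z : GL2 ℓ} (hns : ¬ IsScalar z) (hsq : IsScalar (z*z)) :
    (mat z).trace = 0 := by
  obtain ⟨c, hc⟩ := hsq
  rw [mat_mul] at hc
  have hch := ch2 (mat z)
  rw [hc] at hch
  by_contra ht
  apply hns
  refine ⟨((mat z).trace)⁻¹ * (c + (mat z).det), ?_⟩
  have h1 : (mat z).trace • mat z = (c + (mat z).det) • 1 := by
    have h0 : (mat z).trace • mat z = c • 1 + (mat z).det • 1 := by
      rw [hch]; abel
    rw [h0, ← add_smul]
  calc mat z = ((mat z).trace)⁻¹ • ((mat z).trace • mat z) := by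
        rw [smul_smul, inv_mul_cancel₀ ht, one_smul]
    _ = ((mat z).trace)⁻¹ • ((c + (mat z).det) • 1) := by rw [h1]
    _ = (((mat z).trace)⁻¹ * (c + (mat z).det)) • 1 := by rw [smul_smul]

lemma chi_det_of_sq_scalar (hℓ : ℓ ≠ 2) {z : GL2 ℓ} (hns : ¬ IsScalar z)
    (hsq : IsScalar (z*z)) (hdisc : ¬ IsSquare (disc z)) :
    quadraticChar (ZMod ℓ) ((mat z).det) = quadraticChar (ZMod ℓ) (-1) * -1 := by
  have ht := trace_zero_of_sq_scalar hns hsq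
  have hd : disc z = (2*2) * (-(mat z).det) := by
    unfold disc; rw [ht]; ring
  have h1 : quadraticChar (ZMod ℓ) (-(mat z).det) = -1 := by
    have h2 : quadraticChar (ZMod ℓ) (disc z) = -1 :=
      quadraticChar_neg_one_iff_not_isSquare.mpr hdisc
    rw [hd, _root_.map_mul, chi_sq_eq_one (two_ne hℓ), one_mul] at h2
    exact h2
  exact nonsquare_detneg_flip h1

lemma chi_det_of_anti (hℓ : ℓ ≠ 2) {δ : ZMod ℓ} {X h : GL2 ℓ}
    (hanti : InNnsAnti δ (X * h * X⁻¹)) (hdisc : ¬ IsSquare (disc h)) :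
    quadraticChar (ZMod ℓ) ((mat h).det) = quadraticChar (ZMod ℓ) (-1) * -1 :=
  nonsquare_detneg_flip (chi_det_neg_of_anti hℓ hanti hdisc)

/-- If the torus has even index over the scalars, there is a projective involution in it. -/
lemma torus_two_dvd_imp {δ : ZMod ℓ} {X : GL2 ℓ} {H : Subgroup (GL2 ℓ)}
    (h2 : 2 ∣ Nat.card (cnsSub δ X ⊓ H : Subgroup (GL2 ℓ))
      / Nat.card (scalSub ℓ ⊓ H : Subgroup (GL2 ℓ))) :
    ∃ z : GL2 ℓ, z ∈ H ∧ InCns δ (X*z*X⁻¹) ∧ ¬IsScalar z ∧ IsScalar (z*z) := by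
  classical
  set A : Subgroup (GL2 ℓ) := cnsSub δ X ⊓ H with hA
  set Sg : Subgroup (GL2 ℓ) := scalSub ℓ ⊓ H with hSg
  have hle : Sg ≤ A := inf_le_inf_right H (scal_le_cns X)
  set S' : Subgroup ↥A := Sg.subgroupOf A with hS'
  haveI hS'n : S'.Normal := by
    constructor
    intro n hn g
    have hcomm : (g : GL2 ℓ) * (n : GL2 ℓ) = (n : GL2 ℓ) * (g : GL2 ℓ) := by
      apply torus_comm (X := X) (δ := δ)
      · exact (Subgroup.mem_inf.mp g.2).1
      · exact (Subgroup.mem_inf.mp n.2).1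
    have : g * n * g⁻¹ = n := by
      apply Subtype.ext
      push_cast
      rw [hcomm]
      group
    rw [this]
    exact hn
  have hcards : Nat.card ↥A = Nat.card (↥A ⧸ S') * Nat.card S' :=
    Subgroup.card_eq_card_quotient_mul_card_subgroup S'
  have hcardS' : Nat.card S' = Nat.card Sg :=
    Nat.card_congr (Subgroup.subgroupOfEquivOfLe hle).toEquiv
  haveI : Nonempty ↥Sg := ⟨⟨1, Sg.one_mem⟩⟩
  have hSpos : 0 < Nat.card Sg := Nat.card_pos
  have hquot : Nat.card ↥A / Nat.card Sg = Nat.card (↥A ⧸ S') := by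
    rw [hcards, hcardS', Nat.mul_div_cancel _ hSpos]
  rw [hquot] at h2
  haveI : Finite (↥A ⧸ S') := Quotient.finite _
  haveI : Fintype (↥A ⧸ S') := Fintype.ofFinite _
  haveI : Fact (Nat.Prime 2) := ⟨Nat.prime_two⟩
  obtain ⟨g, hg⟩ := exists_prime_orderOf_dvd_card (G := ↥A ⧸ S') 2
    (by rwa [← Nat.card_eq_fintype_card])
  obtain ⟨z, rfl⟩ := QuotientGroup.mk'_surjective S' g
  have hz2 : z^2 ∈ S' := by
    have hpow : ((QuotientGroup.mk' S') z)^2 = 1 := by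
      have hp := pow_orderOf_eq_one ((QuotientGroup.mk' S') z)
      rwa [hg] at hp
    have hpow2 : (QuotientGroup.mk' S') (z^2) = 1 := by rw [map_pow]; exact hpow
    exact (QuotientGroup.eq_one_iff _).mp hpow2
  have hzS : z ∉ S' := by
    intro hz
    have : (QuotientGroup.mk' S') z = 1 := by
      rw [QuotientGroup.mk'_apply, QuotientGroup.eq_one_iff]
      exact hz
    rw [this] at hg
    simp at hg
  refine ⟨(z : GL2 ℓ), (Subgroup.mem_inf.mp z.2).2, (Subgroup.mem_inf.mp z.2).1, ?_, ?_⟩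
  · intro hsc
    apply hzS
    rw [hS', Subgroup.mem_subgroupOf]
    exact Subgroup.mem_inf.mpr ⟨hsc, (Subgroup.mem_inf.mp z.2).2⟩
  · have := hz2
    rw [hS', Subgroup.mem_subgroupOf] at this
    have hval : ((z^2 : ↥A) : GL2 ℓ) = (z : GL2 ℓ) * (z : GL2 ℓ) := by
      push_cast
      rw [pow_two]
    rw [hval] at this
    exact (Subgroup.mem_inf.mp this).1

/-! ### order-theoretic facts for the case ℓ ≡ 3 mod 4 -/

lemma neg_one_ne_one_GL2 (hℓ : ℓ ≠ 2) : (-1 : GL2 ℓ) ≠ 1 := by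
  intro h
  have h2 : mat (-1 : GL2 ℓ) = mat 1 := by rw [h]
  rw [neg_one_unit_val, mat_one] at h2
  have := congrFun (congrFun h2 0) 0
  simp [Matrix.one_apply] at this
  have h3 : (2 : ZMod ℓ) = 0 := by linear_combination -this
  exact two_ne hℓ h3

lemma eight_dvd_sq_sub_one (h3 : ℓ % 4 = 3) : 8 ∣ ℓ^2 - 1 := by
  obtain ⟨k, hk⟩ : ∃ k, ℓ = 4*k + 3 := ⟨ℓ / 4, by omega⟩
  have h : ℓ^2 = 16*(k*k) + 24*k + 9 := by subst hk; ring
  omega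

/-- From an element g₁ with g₁^((ℓ²-1)/2) = -1 and g₁^(ℓ²-1) = 1 and nonsquare det,
    extract a 2-element of full 2-power order (for ℓ ≡ 3 mod 4). -/
lemma full_two_element (hℓ : ℓ ≠ 2) (h3 : ℓ % 4 = 3) {g₁ : GL2 ℓ}
    (hone : g₁ ^ (ℓ^2 - 1) = 1) (hhalf : g₁ ^ ((ℓ^2 - 1)/2) = -1)
    (hdet : quadraticChar (ZMod ℓ) ((mat g₁).det) = -1) :
    ∃ m₀ : ℕ, Odd m₀ ∧
      (8 ∣ orderOf (g₁ ^ m₀)) ∧ (∃ w : ℕ, orderOf (g₁ ^ m₀) = 2^w) ∧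
      quadraticChar (ZMod ℓ) ((mat (g₁ ^ m₀)).det) = -1 ∧
      ¬ IsScalar (g₁ ^ m₀) := by
  set D := orderOf g₁ with hD
  have hD0 : D ≠ 0 := by
    have : 0 < orderOf g₁ := orderOf_pos g₁
    omega
  have hD2M : D ∣ ℓ^2 - 1 := orderOf_dvd_of_pow_eq_one hone
  have hM2 : 2 * ((ℓ^2-1)/2) = ℓ^2 - 1 := by
    have hodd : Odd ℓ := (Fact.out : ℓ.Prime).odd_of_ne_two hℓ
    obtain ⟨k, hk⟩ := hodd
    have h : ℓ^2 = 4*(k*k) + 4*k + 1 := by subst hk; ring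
    omega
  have hDM : ¬ D ∣ (ℓ^2-1)/2 := by
    intro hdvd
    have : g₁ ^ ((ℓ^2-1)/2) = 1 := orderOf_dvd_iff_pow_eq_one.mp hdvd
    rw [hhalf] at this
    exact neg_one_ne_one_GL2 hℓ this
  obtain ⟨q, hq⟩ := hD2M
  have hqodd : Odd q := by
    rcases Nat.even_or_odd q with he | ho
    · obtain ⟨q', hq'⟩ := he
      exfalso
      apply hDM
      refine ⟨q', ?_⟩
      have e : D * q = 2*(D*q') := by rw [hq']; ring
      omega
    · exact ho
  have h8D : 8 ∣ D := by
    have h8 : 8 ∣ D * q := by rw [← hq]; exact eight_dvd_sq_sub_one h3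
    have hcop : Nat.Coprime 8 q := by
      have h2q : ¬ 2 ∣ q := by rcases hqodd with ⟨t, ht⟩; omega
      have : Nat.Coprime 2 q := (Nat.prime_two.coprime_iff_not_dvd).mpr h2q
      exact Nat.Coprime.pow_left 3 this
    exact (Nat.Coprime.dvd_of_dvd_mul_right hcop) h8
  set w := D.factorization 2 with hw
  set m₀ := D / 2^w with hm₀
  have hexp : 2^w * m₀ = D := Nat.ordProj_mul_ordCompl_eq_self D 2
  have hm₀odd : Odd m₀ := by
    have h2 := Nat.not_dvd_ordCompl (Nat.prime_two) hD0
    rcases Nat.even_or_odd m₀ with he | ho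
    · exact absurd (even_iff_two_dvd.mp he) h2
    · exact ho
  have hm₀0 : m₀ ≠ 0 := by
    intro h'
    rw [h', mul_zero] at hexp
    exact hD0 hexp.symm
  have hm₀dvd : m₀ ∣ D := Nat.ordCompl_dvd D 2
  have horder : orderOf (g₁ ^ m₀) = 2^w := by
    rw [orderOf_pow g₁, ← hD, Nat.gcd_eq_right hm₀dvd]
    rw [← hexp]
    exact Nat.mul_div_cancel _ (Nat.pos_of_ne_zero hm₀0)
  have h8w : 8 ∣ 2^w := by
    have h8' : 8 ∣ 2^w * m₀ := by rw [hexp]; exact h8D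
    have hcop : Nat.Coprime 8 m₀ := by
      have h2q : ¬ 2 ∣ m₀ := by rcases hm₀odd with ⟨t, ht⟩; omega
      exact Nat.Coprime.pow_left 3 ((Nat.prime_two.coprime_iff_not_dvd).mpr h2q)
    exact Nat.Coprime.dvd_of_dvd_mul_right hcop h8'
  refine ⟨m₀, hm₀odd, by rw [horder]; exact h8w, ⟨w, horder⟩, ?_, ?_⟩
  · rw [mat_pow, Matrix.det_pow, map_pow, hdet]
    exact Odd.neg_one_pow hm₀odd
  · rintro ⟨c, hc⟩
    have hc0 : c ≠ 0 := scalar_coeff_ne hc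
    have heq : g₁ ^ m₀ = scalHom ℓ (Units.mk0 c hc0) := by
      apply units_ext
      rw [mat_scalHom]
      exact hc
    have hord2 : orderOf (Units.mk0 c hc0) = 2^w := by
      rw [← orderOf_injective (scalHom ℓ) scalHom_inj, ← heq, horder]
    have hdvd : 2^w ∣ ℓ - 1 := by
      rw [← hord2, ← card_units_zmod]
      exact orderOf_dvd_natCard _
    have h8l : 8 ∣ ℓ - 1 := dvd_trans h8w hdvd
    have hge := (Fact.out : ℓ.Prime).two_le
    omega

/-! ### pure nat arithmetic lemmas -/

lemma nat_orbit_eq {n a s cov : ℕ} (h1 : cov = n - s) (h2 : cov * a = n * (a - s))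
    (hs : 1 ≤ s) (hsa : s ≤ a) (han : a ≤ n) : a = n := by
  have hd : a = s + (a - s) := by omega
  have hm : n = s + (n - s) := by omega
  set d := a - s with hdd
  set m := n - s with hmm
  have key : m * (s + d) = (s + m) * d := by
    rw [← hd, ← hm, ← h1]
    exact h2
  have key2 : m * s + m * d = s * d + m * d := by
    have e1 : m * (s + d) = m * s + m * d := by ring
    have e2 : (s + m) * d = s * d + m * d := by ring
    omega
  have key3 : m * s = s * d := by omega
  have key4 : s * m = s * d := by rw [← key3]; ring
  have : m = d := Nat.eq_of_mul_eq_mul_left (by omega) key4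
  omega

lemma nat_contra3 {n a s a' nn' cov cov' d d' : ℕ} (hd : a = s + d) (hd' : a' = s + d')
    (h1 : cov * a = n * d) (h2 : cov' * nn' = n * d') (hnn : nn' ≤ 2*a')
    (h4 : 3*s ≤ d) (h5 : s ≤ d') (hsum : cov + cov' + s ≤ n) (hs : 1 ≤ s) : False := by
  have c1 : 3*n ≤ 4*cov := by
    have e1 : n*(3*s) ≤ n*d := Nat.mul_le_mul_left n h4
    have big : 3*n*a ≤ 4*cov*a := by
      calc 3*n*a = 3*(n*s) + 3*(n*d) := by rw [hd]; ring
        _ ≤ 3*(n*d) + (n*d) := by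
            have e2 : n*(3*s) = 3*(n*s) := by ring
            omega
        _ = 4*(n*d) := by ring
        _ = 4*(cov*a) := by rw [h1]
        _ = 4*cov*a := by ring
    exact Nat.le_of_mul_le_mul_right big (by omega)
  have c2 : n ≤ 4*cov' := by
    have e1 : n*s ≤ n*d' := Nat.mul_le_mul_left n h5
    have e2 : cov'*nn' ≤ cov'*(2*a') := Nat.mul_le_mul_left cov' hnn
    have big : n*a' ≤ 4*cov'*a' := by
      calc n*a' = n*s + n*d' := by rw [hd']; ring
        _ ≤ 2*(n*d') := by omega
        _ = 2*(cov'*nn') := by rw [h2]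
        _ ≤ 2*(cov'*(2*a')) := by omega
        _ = 4*cov'*a' := by ring
    exact Nat.le_of_mul_le_mul_right big (by omega)
  omega

lemma nat_contra1 {n a s a' cov cov' d d' : ℕ} (hd : a = s + d) (hd' : a' = s + d')
    (h1 : cov * a = n * d) (h2 : cov' * a' = n * d')
    (h4 : 2*s ≤ d) (h5 : 2*s ≤ d') (hsum : cov + cov' + s ≤ n) (hs : 1 ≤ s) : False := by
  have c1 : 2*n ≤ 3*cov := by
    have e1 : n*(2*s) ≤ n*d := Nat.mul_le_mul_left n h4
    have e2 : n*(2*s) = 2*(n*s) := by ring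
    have big : 2*n*a ≤ 3*cov*a := by
      calc 2*n*a = 2*(n*s) + 2*(n*d) := by rw [hd]; ring
        _ ≤ 3*(n*d) := by omega
        _ = 3*(cov*a) := by rw [h1]
        _ = 3*cov*a := by ring
    exact Nat.le_of_mul_le_mul_right big (by omega)
  have c2 : 2*n ≤ 3*cov' := by
    have e1 : n*(2*s) ≤ n*d' := Nat.mul_le_mul_left n h5
    have e2 : n*(2*s) = 2*(n*s) := by ring
    have big : 2*n*a' ≤ 3*cov'*a' := by
      calc 2*n*a' = 2*(n*s) + 2*(n*d') := by rw [hd']; ring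
        _ ≤ 3*(n*d') := by omega
        _ = 3*(cov'*a') := by rw [h2]
        _ = 3*cov'*a' := by ring
    exact Nat.le_of_mul_le_mul_right big (by omega)
  omega

lemma nat_4s_dvd {s a t : ℕ} (hs2 : s ∣ 2*(2*t+1)) (hsa : s ∣ a) (h8 : 8 ∣ a)
    (hs : 1 ≤ s) (ha : 1 ≤ a) : 4*s ≤ a := by
  have key : 4*s ∣ a := by
    rcases Nat.even_or_odd s with he | ho
    · obtain ⟨s', hs'⟩ := he
      have hss : s = 2*s' := by omega
      have hdvd' : s' ∣ 2*t+1 := by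
        have h2' : 2*s' ∣ 2*(2*t+1) := by rw [← hss]; exact hs2
        exact (Nat.mul_dvd_mul_iff_left (by norm_num : 0 < 2)).mp h2'
      have hs'odd : ¬ 2 ∣ s' := by
        intro h2''
        have : (2:ℕ) ∣ 2*t+1 := dvd_trans h2'' hdvd'
        omega
      have hs'dvd : s' ∣ a := dvd_trans ⟨2, by omega⟩ hsa
      have hcop : Nat.Coprime 8 s' :=
        Nat.Coprime.pow_left 3 ((Nat.prime_two.coprime_iff_not_dvd).mpr hs'odd)
      have : 8*s' ∣ a := Nat.Coprime.mul_dvd_of_dvd_of_dvd hcop h8 hs'dvd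
      have he3 : 4*s = 8*s' := by omega
      rwa [he3]
    · have hsodd : ¬ 2 ∣ s := by rcases ho with ⟨t', ht'⟩; omega
      have hcop : Nat.Coprime 4 s :=
        Nat.Coprime.pow_left 2 ((Nat.prime_two.coprime_iff_not_dvd).mpr hsodd)
      have h4 : 4 ∣ a := dvd_trans ⟨2, by norm_num⟩ h8
      exact Nat.Coprime.mul_dvd_of_dvd_of_dvd hcop h4 hsa
  exact Nat.le_of_dvd (by omega) key

lemma nat_3s_le {s a : ℕ} (hdvd : s ∣ a) (hodd : ¬ 2 ∣ a / s) (hlt : s < a) (hs : 1 ≤ s) :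
    3*s ≤ a := by
  obtain ⟨k, rfl⟩ := hdvd
  have hk : (s*k)/s = k := by
    rw [Nat.mul_div_cancel_left _ (by omega)]
  rw [hk] at hodd
  have : k ≥ 2 := by
    rcases Nat.lt_or_ge k 2 with h | h
    · interval_cases k <;> omega
    · exact h
  have : k ≠ 2 := by rintro rfl; exact hodd ⟨1, rfl⟩
  have hk3 : 3 ≤ k := by
    rcases Nat.even_or_odd k with he | ho
    · obtain ⟨j, hj⟩ := he
      omega
    · omega
  calc 3*s = s*3 := by ring
    _ ≤ s*k := Nat.mul_le_mul_left s hk3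
/-! ### assembling the hypotheses -/

lemma neg_one_ne_zero' (hℓ : ℓ ≠ 2) : (-1 : ZMod ℓ) ≠ 0 := by
  intro h
  have h1 : (1 : ZMod ℓ) = 0 := by linear_combination -h
  exact one_ne_zero h1

lemma chi_neg_one_of_three (h3 : ℓ % 4 = 3) :
    quadraticChar (ZMod ℓ) (-1 : ZMod ℓ) = -1 := by
  apply quadraticChar_neg_one_iff_not_isSquare.mpr
  intro hsq
  have := (ZMod.exists_sq_eq_neg_one_iff (p := ℓ)).mp hsq
  exact this h3

lemma chi_neg_one_of_one (hℓ : ℓ ≠ 2) (h1 : ℓ % 4 = 1) :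
    quadraticChar (ZMod ℓ) (-1 : ZMod ℓ) = 1 := by
  apply (quadraticChar_one_iff_isSquare (neg_one_ne_zero' hℓ)).mpr
  apply (ZMod.exists_sq_eq_neg_one_iff (p := ℓ)).mpr
  omega

lemma nonscalar_of_nonsquare_det {g : GL2 ℓ} (h : ¬ IsSquare ((mat g).det)) :
    ¬ IsScalar g := by
  rintro ⟨c, hc⟩
  apply h
  rw [hc]
  refine ⟨c, ?_⟩
  rw [Matrix.det_smul, Matrix.det_one]
  simp [pow_two]

lemma disc_nonsquare_of_conj (hℓ : ℓ ≠ 2) {δ : ZMod ℓ} (hδ : ¬ IsSquare δ)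
    {g x : GL2 ℓ} (hc : InCns δ (x*g*x⁻¹)) (hns : ¬ IsScalar g) :
    ¬ IsSquare (disc g) := by
  set y := x*g*x⁻¹ with hy
  have hyns : ¬ IsScalar y := fun hs => hns (scalar_conj_iff.mp hs)
  have hb : mat y 1 0 ≠ 0 := cns_nonscalar_b_ne hc hyns
  have hdisc : disc g = δ * ((2 * mat y 1 0) * (2 * mat y 1 0)) := by
    rw [← disc_conj x g, ← hy]
    unfold disc
    rw [cns_trace hc, cns_det hc]
    ring
  rintro ⟨t, ht⟩
  apply hδ
  have hc2 : (2 * mat y 1 0) ≠ 0 := mul_ne_zero (two_ne hℓ) hb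
  refine ⟨t * (2 * mat y 1 0)⁻¹, ?_⟩
  rw [hdisc] at ht
  rw [show t * (2 * mat y 1 0)⁻¹ * (t * (2 * mat y 1 0)⁻¹)
      = (t * t) * ((2 * mat y 1 0) * (2 * mat y 1 0))⁻¹ by rw [mul_mul_mul_comm t _ t _, ← mul_inv], ← ht,
    mul_inv_cancel_right₀ (mul_ne_zero hc2 hc2)]

/-! ### main case ℓ ≡ 3 (mod 4) -/

lemma case_three (hℓ : ℓ ≠ 2) {δ : ZMod ℓ} (hδ : ¬ IsSquare δ) (h3 : ℓ % 4 = 3)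
    (G : Subgroup (GL2 ℓ))
    (hdisc : ∀ g ∈ G, ¬ IsScalar g → ¬ IsSquare (disc g))
    {g₁ : GL2 ℓ} (hg₁G : g₁ ∈ G)
    (hχ₁ : quadraticChar (ZMod ℓ) ((mat g₁).det) = -1)
    (hloc : ∀ g ∈ G, ∃ x : GL2 ℓ, InCns δ (x * g * x⁻¹)) :
    ∃ x : GL2 ℓ, ∀ g ∈ G, InCns δ (x * g * x⁻¹) := by
  classical
  have hg₁det : ¬ IsSquare ((mat g₁).det) :=
    quadraticChar_neg_one_iff_not_isSquare.mp hχ₁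
  have hg₁ns : ¬ IsScalar g₁ := nonscalar_of_nonsquare_det hg₁det
  have hXgex : ∃ X : GL2 ℓ, InCns δ (X*g₁*X⁻¹) ∧ ¬ IsScalar (X*g₁*X⁻¹) := by
    obtain ⟨x', hx'⟩ := hloc g₁ hg₁G
    exact exists_conj_cns hℓ hδ g₁ hg₁ns (disc_nonsquare_of_conj hℓ hδ hx' hg₁ns)
  obtain ⟨Xg, hXgc, -⟩ := hXgex
  have hone := pow_card_sq_sub_one_of_conj hℓ hδ hXgc
  have hhalf := pow_half_of_conj hℓ hδ hXgc hg₁det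
  obtain ⟨m₀, hm₀odd, h8ord, _, hχs, hsns⟩ := full_two_element hℓ h3 hone hhalf hχ₁
  set selt := g₁ ^ m₀ with hselt
  have hseltG : selt ∈ G := pow_mem hg₁G m₀
  obtain ⟨X₀, hX₀c, hX₀ns⟩ :=
    exists_conj_cns hℓ hδ selt hsns (hdisc selt hseltG hsns)
  have hχm := chi_neg_one_of_three h3
  -- ★ : no anti elements in G for this torus
  have hnoanti : ∀ h ∈ G, ¬ InNnsAnti δ (X₀*h*X₀⁻¹) := by
    intro h hhG hanti
    have hhns : ¬ IsScalar h := fun hs => anti_not_scalar hℓ hanti (scalar_conj hs)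
    have hχh := chi_det_of_anti hℓ hanti (hdisc h hhG hhns)
    have hanti2 : InNnsAnti δ (X₀*(selt*h)*X₀⁻¹) := by
      rw [← conj_mul]; exact cns_mul_anti hX₀c hanti
    have hshns : ¬ IsScalar (selt*h) :=
      fun hs => anti_not_scalar hℓ hanti2 (scalar_conj hs)
    have hχsh := chi_det_of_anti hℓ hanti2 (hdisc _ (mul_mem hseltG hhG) hshns)
    rw [mat_mul, Matrix.det_mul, _root_.map_mul, hχs, hχh, hχm] at hχsh
    norm_num at hχsh
  -- counting setup
  have hcount := count_eq hℓ hδ G X₀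
  rw [nns_eq_cns_of_noanti hnoanti] at hcount
  set n := (fsub G).card with hn
  set a := (fsub (cnsSub δ X₀ ⊓ G)).card with ha
  set s := (fsub (scalSub ℓ ⊓ G)).card with hs
  have hSA : fsub (scalSub ℓ ⊓ G) ⊆ fsub (cnsSub δ X₀ ⊓ G) :=
    fsub_mono (inf_le_inf_right G (scal_le_cns X₀))
  have hAG : fsub (cnsSub δ X₀ ⊓ G) ⊆ fsub G := fsub_mono inf_le_right
  have hSG : fsub (scalSub ℓ ⊓ G) ⊆ fsub G := fsub_mono inf_le_right
  have hcard_sdiff : (fsub (cnsSub δ X₀ ⊓ G) \ fsub (scalSub ℓ ⊓ G)).card = a - s :=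
    Finset.card_sdiff_of_subset hSA
  rw [hcard_sdiff] at hcount
  have hs1 : 1 ≤ s := by
    have : (1 : GL2 ℓ) ∈ fsub (scalSub ℓ ⊓ G) := mem_fsub.mpr (one_mem _)
    exact Finset.card_pos.mpr ⟨1, this⟩
  have hseltA : selt ∈ fsub (cnsSub δ X₀ ⊓ G) :=
    mem_fsub.mpr (Subgroup.mem_inf.mpr ⟨mem_cnsSub.mpr hX₀c, hseltG⟩)
  have hseltnS : selt ∉ fsub (scalSub ℓ ⊓ G) := by
    intro hmem
    exact hsns (mem_fsub.mp hmem).1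
  have hsa : s < a := by
    apply Finset.card_lt_card
    rw [Finset.ssubset_iff_of_subset hSA]
    exact ⟨selt, hseltA, hseltnS⟩
  have han : a ≤ n := Finset.card_le_card hAG
  -- 8 ∣ a
  have h8a : 8 ∣ a := by
    have hmem : selt ∈ (cnsSub δ X₀ ⊓ G : Subgroup (GL2 ℓ)) :=
      Subgroup.mem_inf.mpr ⟨mem_cnsSub.mpr hX₀c, hseltG⟩
    have hdvd1 : orderOf selt ∣ Nat.card (cnsSub δ X₀ ⊓ G : Subgroup (GL2 ℓ)) := by
      have he : orderOf ((cnsSub δ X₀ ⊓ G : Subgroup (GL2 ℓ)).subtype ⟨selt, hmem⟩)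
          = orderOf (⟨selt, hmem⟩ : ↥(cnsSub δ X₀ ⊓ G : Subgroup (GL2 ℓ))) :=
        orderOf_injective _ (Subtype.coe_injective) _
      have he2 : (cnsSub δ X₀ ⊓ G : Subgroup (GL2 ℓ)).subtype ⟨selt, hmem⟩ = selt := rfl
      rw [he2] at he
      rw [he]
      exact orderOf_dvd_natCard _
    rw [← card_fsub, ← ha] at hdvd1
    exact dvd_trans h8ord hdvd1
  -- s ∣ a and s ∣ ℓ - 1
  have hsdvda : s ∣ a := by
    rw [hs, ha, card_fsub, card_fsub]
    exact Subgroup.card_dvd_of_le (inf_le_inf_right G (scal_le_cns X₀))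
  have hsdvdl : s ∣ ℓ - 1 := by
    rw [hs, card_fsub, ← card_scalSub (ℓ := ℓ)]
    exact Subgroup.card_dvd_of_le inf_le_left
  have h4s : 4*s ≤ a := by
    obtain ⟨t, htt⟩ : ∃ t, ℓ = 4*t + 3 := ⟨ℓ/4, by omega⟩
    apply nat_4s_dvd (t := t) _ hsdvda h8a hs1 (by omega)
    have : ℓ - 1 = 2*(2*t+1) := by omega
    rwa [this] at hsdvdl
  -- coverage dichotomy
  by_cases hcover : ∀ y ∈ fsub G, y ∉ fsub (scalSub ℓ ⊓ G) → y ∈ covFin δ X₀ G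
  · -- single orbit : G = torus
    have hcov_eq : covFin δ X₀ G = fsub G \ fsub (scalSub ℓ ⊓ G) := by
      apply Finset.Subset.antisymm cov_subset
      intro y hy
      rw [Finset.mem_sdiff] at hy
      exact hcover y hy.1 hy.2
    have hcovcard : (covFin δ X₀ G).card = n - s := by
      rw [hcov_eq, Finset.card_sdiff_of_subset hSG]
    have haEQ : a = n := nat_orbit_eq hcovcard hcount hs1 (le_of_lt hsa) han
    have hAeq : fsub (cnsSub δ X₀ ⊓ G) = fsub G :=
      Finset.eq_of_subset_of_card_le hAG (by omega)
    refine ⟨X₀, fun g hg => ?_⟩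
    have : g ∈ fsub (cnsSub δ X₀ ⊓ G) := by
      rw [hAeq]; exact mem_fsub.mpr hg
    exact mem_cnsSub.mp (Subgroup.mem_inf.mp (mem_fsub.mp this)).1
  · -- second orbit : contradiction
    exfalso
    push_neg at hcover
    obtain ⟨x₁, hx₁G', hx₁nS, hx₁cov⟩ := hcover
    have hx₁G : x₁ ∈ G := mem_fsub.mp hx₁G'
    have hx₁ns : ¬ IsScalar x₁ := by
      intro hsc
      exact hx₁nS (mem_fsub.mpr (Subgroup.mem_inf.mpr ⟨hsc, hx₁G⟩))
    obtain ⟨X₁, hX₁c, hX₁ns⟩ :=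
      exists_conj_cns hℓ hδ x₁ hx₁ns (hdisc x₁ hx₁G hx₁ns)
    have hcount' := count_eq hℓ hδ G X₁
    set a' := (fsub (cnsSub δ X₁ ⊓ G)).card with ha'
    set nn' := (fsub (nnsSub δ X₁ ⊓ G)).card with hnn'
    have hSA' : fsub (scalSub ℓ ⊓ G) ⊆ fsub (cnsSub δ X₁ ⊓ G) :=
      fsub_mono (inf_le_inf_right G (scal_le_cns X₁))
    rw [Finset.card_sdiff_of_subset hSA'] at hcount'
    have hx₁A : x₁ ∈ fsub (cnsSub δ X₁ ⊓ G) :=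
      mem_fsub.mpr (Subgroup.mem_inf.mpr ⟨mem_cnsSub.mpr hX₁c, hx₁G⟩)
    have hsa' : s < a' := by
      apply Finset.card_lt_card
      rw [Finset.ssubset_iff_of_subset hSA']
      exact ⟨x₁, hx₁A, hx₁nS⟩
    have hsdvda' : s ∣ a' := by
      rw [hs, ha', card_fsub, card_fsub]
      exact Subgroup.card_dvd_of_le (inf_le_inf_right G (scal_le_cns X₁))
    have h2s : 2*s ≤ a' := by
      obtain ⟨k, hk⟩ := hsdvda'
      have hk2 : 2 ≤ k := by
        rcases Nat.lt_or_ge k 2 with h | h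
        · interval_cases k <;> omega
        · exact h
      calc 2*s = s*2 := by ring
        _ ≤ s*k := Nat.mul_le_mul_left s hk2
        _ = a' := hk.symm
    have hdisj : Disjoint (covFin δ X₀ G) (covFin δ X₁ G) :=
      cov_disjoint hδ hx₁G hX₁c hx₁ns hx₁cov
    have hsum : (covFin δ X₀ G).card + (covFin δ X₁ G).card + s ≤ n := by
      have hsub : covFin δ X₀ G ∪ covFin δ X₁ G ⊆ fsub G \ fsub (scalSub ℓ ⊓ G) :=
        Finset.union_subset cov_subset cov_subset
      have := Finset.card_le_card hsub
      rw [Finset.card_union_of_disjoint hdisj, Finset.card_sdiff_of_subset hSG] at this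
      omega
    have hle2 : nn' ≤ 2*a' := nns_card_le
    exact nat_contra3 (d := a - s) (d' := a' - s)
      (by omega) (by omega) hcount hcount' hle2
      (by omega) (by omega) hsum hs1

/-! ### main case ℓ ≡ 1 (mod 4) -/

def sqSub (G : Subgroup (GL2 ℓ)) : Subgroup (GL2 ℓ) where
  carrier := {g | g ∈ G ∧ quadraticChar (ZMod ℓ) ((mat g).det) = 1}
  one_mem' := ⟨G.one_mem, by rw [mat_one, Matrix.det_one, _root_.map_one]⟩
  mul_mem' := by
    rintro a b ⟨haG, ha⟩ ⟨hbG, hb⟩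
    exact ⟨mul_mem haG hbG, by rw [mat_mul, Matrix.det_mul, _root_.map_mul, ha, hb, mul_one]⟩
  inv_mem' := by
    rintro a ⟨haG, ha⟩
    refine ⟨inv_mem haG, ?_⟩
    have h1 : (mat a).det * (mat a⁻¹).det = 1 := by
      rw [← Matrix.det_mul, mat_mul_inv, Matrix.det_one]
    have h2 := congrArg (quadraticChar (ZMod ℓ)) h1
    rw [_root_.map_mul, _root_.map_one, ha, one_mul] at h2
    exact h2

lemma mem_sqSub {G : Subgroup (GL2 ℓ)} {g : GL2 ℓ} :
    g ∈ sqSub G ↔ (g ∈ G ∧ quadraticChar (ZMod ℓ) ((mat g).det) = 1) := Iff.rfl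

lemma sqSub_le {G : Subgroup (GL2 ℓ)} : sqSub G ≤ G := fun _ h => h.1

lemma case_one (hℓ : ℓ ≠ 2) {δ : ZMod ℓ} (hδ : ¬ IsSquare δ) (h1 : ℓ % 4 = 1)
    (G : Subgroup (GL2 ℓ))
    (hdisc : ∀ g ∈ G, ¬ IsScalar g → ¬ IsSquare (disc g))
    {g₁ : GL2 ℓ} (hg₁G : g₁ ∈ G)
    (hχ₁ : quadraticChar (ZMod ℓ) ((mat g₁).det) = -1) :
    (∃ x : GL2 ℓ, ∀ g ∈ G, InCns δ (x * g * x⁻¹)) ∨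
    (∃ x : GL2 ℓ, ∀ g ∈ G, InNns δ (x * g * x⁻¹)) := by
  classical
  have hχm := chi_neg_one_of_one hℓ h1
  have hg₁det : ¬ IsSquare ((mat g₁).det) :=
    quadraticChar_neg_one_iff_not_isSquare.mp hχ₁
  have hg₁ns : ¬ IsScalar g₁ := nonscalar_of_nonsquare_det hg₁det
  -- no anti elements in sqSub G, for any conjugated torus
  have hnoanti : ∀ (X : GL2 ℓ), ∀ h ∈ sqSub G, ¬ InNnsAnti δ (X*h*X⁻¹) := by
    intro X h hh hanti
    have hhns : ¬ IsScalar h := fun hs => anti_not_scalar hℓ hanti (scalar_conj hs)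
    have hχh := chi_det_of_anti hℓ hanti (hdisc h hh.1 hhns)
    rw [hχm, one_mul] at hχh
    rw [hh.2] at hχh
    norm_num at hχh
  -- no projective involutions in sqSub G
  have hnoinv : ∀ z ∈ sqSub G, ¬ IsScalar z → ¬ IsScalar (z*z) := by
    intro z hz hzns hsq
    have hχz := chi_det_of_sq_scalar hℓ hzns hsq (hdisc z hz.1 hzns)
    rw [hχm, one_mul, hz.2] at hχz
    norm_num at hχz
  by_cases hallscal : ∀ z ∈ sqSub G, IsScalar z
  · -- G⁰ is all scalar : G is contained in the torus of g₁
    left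
    have hXgex : ∃ X : GL2 ℓ, InCns δ (X*g₁*X⁻¹) ∧ ¬ IsScalar (X*g₁*X⁻¹) := by
      have hd := hdisc g₁ hg₁G hg₁ns
      exact exists_conj_cns hℓ hδ g₁ hg₁ns hd
    obtain ⟨X, hXc, -⟩ := hXgex
    refine ⟨X, fun g hg => ?_⟩
    have hdet0 : (mat g).det ≠ 0 := det_ne_zero g
    rcases quadraticChar_dichotomy hdet0 with hq | hq
    · -- g ∈ sqSub G, hence scalar
      have : IsScalar g := hallscal g ⟨hg, hq⟩
      exact scalar_cns (scalar_conj this)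
    · -- g₁⁻¹ * g ∈ sqSub G
      have hz : g₁⁻¹ * g ∈ sqSub G := by
        refine ⟨mul_mem (inv_mem hg₁G) hg, ?_⟩
        have h1' : (mat g₁).det * (mat g₁⁻¹).det = 1 := by
          rw [← Matrix.det_mul, mat_mul_inv, Matrix.det_one]
        have h2 := congrArg (quadraticChar (ZMod ℓ)) h1'
        rw [_root_.map_mul, _root_.map_one, hχ₁] at h2
        have hinv : quadraticChar (ZMod ℓ) ((mat g₁⁻¹).det) = -1 := by linarith
        rw [mat_mul, Matrix.det_mul, _root_.map_mul, hinv, hq]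
        norm_num
      have hzs : IsScalar (g₁⁻¹ * g) := hallscal _ hz
      have hgeq : g = g₁ * (g₁⁻¹ * g) := by group
      rw [hgeq, ← conj_mul]
      exact cns_mul hXc (scalar_cns (scalar_conj hzs))
  · -- G⁰ has a nonscalar element x₀
    right
    push_neg at hallscal
    obtain ⟨x₀, hx₀sq, hx₀ns⟩ := hallscal
    have hx₀G : x₀ ∈ G := hx₀sq.1
    obtain ⟨X₀, hX₀c, hX₀ns⟩ :=
      exists_conj_cns hℓ hδ x₀ hx₀ns (hdisc x₀ hx₀G hx₀ns)
    -- counting in H := sqSub G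
    set H : Subgroup (GL2 ℓ) := sqSub G with hH
    have hcount := count_eq hℓ hδ H X₀
    rw [nns_eq_cns_of_noanti (hnoanti X₀)] at hcount
    set n := (fsub H).card with hn
    set a := (fsub (cnsSub δ X₀ ⊓ H)).card with ha
    set s := (fsub (scalSub ℓ ⊓ H)).card with hs
    have hSA : fsub (scalSub ℓ ⊓ H) ⊆ fsub (cnsSub δ X₀ ⊓ H) :=
      fsub_mono (inf_le_inf_right H (scal_le_cns X₀))
    have hAG : fsub (cnsSub δ X₀ ⊓ H) ⊆ fsub H := fsub_mono inf_le_right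
    have hSG : fsub (scalSub ℓ ⊓ H) ⊆ fsub H := fsub_mono inf_le_right
    rw [Finset.card_sdiff_of_subset hSA] at hcount
    have hs1 : 1 ≤ s := by
      have : (1 : GL2 ℓ) ∈ fsub (scalSub ℓ ⊓ H) := mem_fsub.mpr (one_mem _)
      exact Finset.card_pos.mpr ⟨1, this⟩
    have hx₀A : x₀ ∈ fsub (cnsSub δ X₀ ⊓ H) :=
      mem_fsub.mpr (Subgroup.mem_inf.mpr ⟨mem_cnsSub.mpr hX₀c, hx₀sq⟩)
    have hx₀nS : x₀ ∉ fsub (scalSub ℓ ⊓ H) := fun hmem => hx₀ns (mem_fsub.mp hmem).1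
    have hsa : s < a := by
      apply Finset.card_lt_card
      rw [Finset.ssubset_iff_of_subset hSA]
      exact ⟨x₀, hx₀A, hx₀nS⟩
    have han : a ≤ n := Finset.card_le_card hAG
    -- the index of scalars in a torus of H is odd : a ≥ 3s
    have h3s : ∀ (X : GL2 ℓ), ∀ x ∈ H, ¬ IsScalar x → InCns δ (X*x*X⁻¹) →
        3 * (fsub (scalSub ℓ ⊓ H)).card ≤ (fsub (cnsSub δ X ⊓ H)).card := by
      intro X x hxH hxns hxc
      have hsdvd : (fsub (scalSub ℓ ⊓ H)).card ∣ (fsub (cnsSub δ X ⊓ H)).card := by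
        rw [card_fsub, card_fsub]
        exact Subgroup.card_dvd_of_le (inf_le_inf_right H (scal_le_cns X))
      have hodd : ¬ 2 ∣ (fsub (cnsSub δ X ⊓ H)).card / (fsub (scalSub ℓ ⊓ H)).card := by
        intro h2
        rw [card_fsub, card_fsub] at h2
        obtain ⟨z, hzH, hzc, hzns, hzsq⟩ := torus_two_dvd_imp h2
        exact hnoinv z hzH hzns hzsq
      have hlt : (fsub (scalSub ℓ ⊓ H)).card < (fsub (cnsSub δ X ⊓ H)).card := by
        apply Finset.card_lt_card
        rw [Finset.ssubset_iff_of_subset (fsub_mono (inf_le_inf_right H (scal_le_cns X)))]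
        refine ⟨x, mem_fsub.mpr (Subgroup.mem_inf.mpr ⟨mem_cnsSub.mpr hxc, hxH⟩),
          fun hmem => hxns (mem_fsub.mp hmem).1⟩
      exact nat_3s_le hsdvd hodd hlt (by
        have : (1 : GL2 ℓ) ∈ fsub (scalSub ℓ ⊓ H) := mem_fsub.mpr (one_mem _)
        exact Finset.card_pos.mpr ⟨1, this⟩)
    have h3s₀ : 3*s ≤ a := h3s X₀ x₀ hx₀sq hx₀ns hX₀c
    by_cases hcover : ∀ y ∈ fsub H, y ∉ fsub (scalSub ℓ ⊓ H) → y ∈ covFin δ X₀ H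
    · -- single orbit : H = torus, G normalizes it
      have hcov_eq : covFin δ X₀ H = fsub H \ fsub (scalSub ℓ ⊓ H) := by
        apply Finset.Subset.antisymm cov_subset
        intro y hy
        rw [Finset.mem_sdiff] at hy
        exact hcover y hy.1 hy.2
      have hcovcard : (covFin δ X₀ H).card = n - s := by
        rw [hcov_eq, Finset.card_sdiff_of_subset hSG]
      have haEQ : a = n := nat_orbit_eq hcovcard hcount hs1 (le_of_lt hsa) han
      have hAeq : fsub (cnsSub δ X₀ ⊓ H) = fsub H :=
        Finset.eq_of_subset_of_card_le hAG (by omega)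
      refine ⟨X₀, fun g hg => ?_⟩
      -- g x₀ g⁻¹ ∈ H is in the torus
      have hwH : g * x₀ * g⁻¹ ∈ H := by
        refine ⟨mul_mem (mul_mem hg hx₀G) (inv_mem hg), ?_⟩
        rw [det_conj]
        exact hx₀sq.2
      have hwc : InCns δ (X₀*(g*x₀*g⁻¹)*X₀⁻¹) := by
        have : g*x₀*g⁻¹ ∈ fsub (cnsSub δ X₀ ⊓ H) := by
          rw [hAeq]; exact mem_fsub.mpr hwH
        exact mem_cnsSub.mp (Subgroup.mem_inf.mp (mem_fsub.mp this)).1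
      have hmb : mat (X₀*x₀*X₀⁻¹) 1 0 ≠ 0 := cns_nonscalar_b_ne hX₀c hX₀ns
      apply cns_normalizer hℓ hδ hX₀c hmb
      rw [conj_conj]
      exact hwc
    · -- second orbit : contradiction
      exfalso
      push_neg at hcover
      obtain ⟨x₁, hx₁H', hx₁nS, hx₁cov⟩ := hcover
      have hx₁H : x₁ ∈ H := mem_fsub.mp hx₁H'
      have hx₁ns : ¬ IsScalar x₁ := by
        intro hsc
        exact hx₁nS (mem_fsub.mpr (Subgroup.mem_inf.mpr ⟨hsc, hx₁H⟩))
      obtain ⟨X₁, hX₁c, hX₁ns⟩ :=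
        exists_conj_cns hℓ hδ x₁ hx₁ns (hdisc x₁ (sqSub_le hx₁H) hx₁ns)
      have hcount' := count_eq hℓ hδ H X₁
      rw [nns_eq_cns_of_noanti (hnoanti X₁)] at hcount'
      set a' := (fsub (cnsSub δ X₁ ⊓ H)).card with ha'
      have hSA' : fsub (scalSub ℓ ⊓ H) ⊆ fsub (cnsSub δ X₁ ⊓ H) :=
        fsub_mono (inf_le_inf_right H (scal_le_cns X₁))
      rw [Finset.card_sdiff_of_subset hSA'] at hcount'
      have h3s₁ : 3*s ≤ a' := h3s X₁ x₁ hx₁H hx₁ns hX₁c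
      have hsa' : s < a' := by omega
      have hdisj : Disjoint (covFin δ X₀ H) (covFin δ X₁ H) :=
        cov_disjoint hδ hx₁H hX₁c hx₁ns hx₁cov
      have hsum : (covFin δ X₀ H).card + (covFin δ X₁ H).card + s ≤ n := by
        have hsub : covFin δ X₀ H ∪ covFin δ X₁ H ⊆ fsub H \ fsub (scalSub ℓ ⊓ H) :=
          Finset.union_subset cov_subset cov_subset
        have := Finset.card_le_card hsub
        rw [Finset.card_union_of_disjoint hdisj, Finset.card_sdiff_of_subset hSG] at this
        omega
      exact nat_contra1 (d := a - s) (d' := a' - s)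
        (by omega) (by omega) hcount hcount'
        (by omega) (by omega) hsum hs1

end LG


/-- If every element of `G ≤ GL₂(F_ℓ)` lies in a conjugate of the nonsplit
Cartan and the determinant map `G → F_ℓˣ` is surjective, then `G` is contained in a
conjugate of `C_ns`, or `G` is contained in a conjugate of `N_ns` and `ℓ ≡ 1 (mod 4)`. -/
theorem local_global_nonsplit_cartan_surjective_det
    {ℓ : ℕ} [Fact ℓ.Prime] (hℓ : ℓ ≠ 2) (δ : ZMod ℓ) (hδ : ¬ IsSquare δ)
    (G : Subgroup (GL2 ℓ))
    (hloc : ∀ g ∈ G, ∃ x : GL2 ℓ, InCns δ (x * g * x⁻¹))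
    (hdet : ∀ u : (ZMod ℓ)ˣ, ∃ g ∈ G, Matrix.GeneralLinearGroup.det g = u) :
    (∃ x : GL2 ℓ, ∀ g ∈ G, InCns δ (x * g * x⁻¹)) ∨
    ((∃ x : GL2 ℓ, ∀ g ∈ G, InNns δ (x * g * x⁻¹)) ∧ ℓ % 4 = 1) := by
  classical
  have hdisc : ∀ g ∈ G, ¬ IsScalar g → ¬ IsSquare (LG.disc g) := by
    intro g hg hns
    obtain ⟨x, hx⟩ := hloc g hg
    exact LG.disc_nonsquare_of_conj hℓ hδ hx hns
  have hchar : ringChar (ZMod ℓ) ≠ 2 := by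
    rw [ZMod.ringChar_zmod_n]; exact hℓ
  obtain ⟨u0, hu0⟩ := FiniteField.exists_nonsquare (F := ZMod ℓ) hchar
  have hu00 : u0 ≠ 0 := fun h => hu0 ⟨0, by simp [h]⟩
  obtain ⟨g₁, hg₁G, hg₁det⟩ := hdet (Units.mk0 u0 hu00)
  have hdetval : (mat g₁).det = u0 := by
    have hv := Matrix.GeneralLinearGroup.val_det_apply g₁
    rw [hg₁det] at hv
    exact (by simpa using hv.symm : (g₁ : Matrix (Fin 2) (Fin 2) (ZMod ℓ)).det = u0)
  have hχ₁ : quadraticChar (ZMod ℓ) ((mat g₁).det) = -1 := by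
    rw [hdetval]
    exact quadraticChar_neg_one_iff_not_isSquare.mpr hu0
  have hmod : ℓ % 4 = 1 ∨ ℓ % 4 = 3 := by
    have hodd : Odd ℓ := (Fact.out : ℓ.Prime).odd_of_ne_two hℓ
    obtain ⟨k, hk⟩ := hodd
    omega
  rcases hmod with h1 | h3
  · rcases LG.case_one hℓ hδ h1 G hdisc hg₁G hχ₁ with h | h
    · exact Or.inl h
    · exact Or.inr ⟨h, h1⟩
  · exact Or.inl (LG.case_three hℓ hδ h3 G hdisc hg₁G hχ₁ hloc)
end

section
/- Let ℓ be an odd prime and let g = diag(a, b) be an invertible diagonal matrix in GL₂(F_ℓ). Then g lies in a conjugate of N_ns (the normalizer of the nonsplit Cartan) if and only if a = b or a = −b. -/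
open Matrix

/-- An invertible diagonal matrix `diag(a, b)` lies in a conjugate of
`N_ns` if and only if `a = b` or `a = -b`. -/
theorem diag_mem_conj_Nns_iff
    {ℓ : ℕ} [Fact ℓ.Prime] (hℓ : ℓ ≠ 2) (δ : ZMod ℓ) (hδ : ¬ IsSquare δ)
    (g : GL2 ℓ) (a b : ZMod ℓ) (hg : mat g = !![a, 0; 0, b]) :
    (∃ x : GL2 ℓ, InNns δ (x * g * x⁻¹)) ↔ (a = b ∨ a = -b) := by
  have h2 : (2 : ZMod ℓ) ≠ 0 := by
    intro h
    have hd : ℓ ∣ 2 := (CharP.cast_eq_zero_iff (ZMod ℓ) ℓ 2).mp (by exact_mod_cast h)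
    exact hℓ ((Nat.prime_dvd_prime_iff_eq Fact.out Nat.prime_two).mp hd)
  constructor
  · rintro ⟨x, hx⟩
    set h : GL2 ℓ := x * g * x⁻¹ with hh
    have hm : mat h = (x : Matrix (Fin 2) (Fin 2) (ZMod ℓ)) * mat g *
        ((x⁻¹ : GL2 ℓ) : Matrix (Fin 2) (Fin 2) (ZMod ℓ)) := by
      simp [mat, hh, Units.val_mul]
    have htr : mat h 0 0 + mat h 1 1 = a + b := by
      have t1 : Matrix.trace (mat h) = Matrix.trace (mat g) := by
        rw [hm, Matrix.trace_mul_comm, ← mul_assoc, ← Units.val_mul]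
        simp
      rw [Matrix.trace_fin_two, Matrix.trace_fin_two, hg] at t1
      simpa using t1
    have hdet : mat h 0 0 * mat h 1 1 - mat h 0 1 * mat h 1 0 = a * b := by
      have t1 : (mat h).det = (mat g).det := by
        rw [hm, Matrix.det_mul, Matrix.det_mul, mul_right_comm, ← Matrix.det_mul,
          ← Units.val_mul]
        simp
      rw [Matrix.det_fin_two, Matrix.det_fin_two, hg] at t1
      simpa using t1
    rcases hx with ⟨e1, e2⟩ | ⟨e1, e2⟩
    · -- C_ns case
      rw [e1] at htr hdet
      rw [e2] at hdet
      have key : (a - b) ^ 2 = 4 * δ * (mat h 1 0 * mat h 1 0) := by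
        linear_combination (-(a + b + 2 * mat h 0 0)) * htr + 4 * hdet
      by_cases hq : mat h 1 0 = 0
      · left
        have h0 : (a - b) ^ 2 = 0 := by rw [key, hq]; ring
        have := pow_eq_zero_iff (n := 2) (by norm_num) |>.mp h0
        exact sub_eq_zero.mp this
      · exfalso
        apply hδ
        refine ⟨(a - b) * (2 * mat h 1 0)⁻¹, ?_⟩
        have hne : (2 * mat h 1 0) ≠ 0 := mul_ne_zero h2 hq
        field_simp
        linear_combination -key
    · -- anti case
      right
      rw [e1] at htr
      have : a + b = 0 := by linear_combination -htr
      exact eq_neg_of_add_eq_zero_left this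
  · intro hab
    refine ⟨1, ?_⟩
    have h1 : (1 : GL2 ℓ) * g * (1 : GL2 ℓ)⁻¹ = g := by group
    rw [h1]
    have hg' : (g : Matrix (Fin 2) (Fin 2) (ZMod ℓ)) = !![a, 0; 0, b] := hg
    rcases hab with rfl | rfl
    · left
      constructor <;> simp [InCns, mat, hg']
    · right
      constructor <;> simp [InNnsAnti, mat, hg']
end

section
/- Let ℓ be an odd prime and let G be a subgroup of N_ns not contained in C_ns, such that every element of G is either a scalar matrix or has irreducible characteristic polynomial over F_ℓ. Then: (a) every element of G ∩ C_ns has determinant a square in F_ℓˣ; and (b) if the determinant map G → F_ℓˣ is surjective, then ℓ ≡ 1 (mod 4). -/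
open Matrix

open Polynomial in
private lemma charpoly_fin2' {R : Type*} [CommRing R] (M : Matrix (Fin 2) (Fin 2) R) :
    M.charpoly = X ^ 2 - C M.trace * X + C M.det := by
  rw [Matrix.charpoly, Matrix.det_fin_two, Matrix.trace_fin_two, Matrix.det_fin_two]
  simp [charmatrix_apply_eq, charmatrix_apply_ne]
  ring

private lemma my_two_ne_zero {ℓ : ℕ} [Fact ℓ.Prime] (hℓ : ℓ ≠ 2) : (2 : ZMod ℓ) ≠ 0 := by
  intro h
  have h2 : ((2 : ℕ) : ZMod ℓ) = 0 := by exact_mod_cast h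
  have := (ZMod.natCast_eq_zero_iff 2 ℓ).mp h2
  exact hℓ ((Nat.prime_dvd_prime_iff_eq (Fact.out : ℓ.Prime) Nat.prime_two).mp this)

private lemma nonsq_mul {ℓ : ℕ} [Fact ℓ.Prime] {a b : ZMod ℓ}
    (ha : a ≠ 0) (hb : b ≠ 0) (hA : ¬ IsSquare a) (hB : ¬ IsSquare b) : IsSquare (a * b) := by
  have hchia : quadraticChar (ZMod ℓ) a = -1 := quadraticChar_neg_one_iff_not_isSquare.mpr hA
  have hchib : quadraticChar (ZMod ℓ) b = -1 := quadraticChar_neg_one_iff_not_isSquare.mpr hB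
  have : quadraticChar (ZMod ℓ) (a * b) = 1 := by
    rw [_root_.map_mul, hchia, hchib]; ring
  exact (quadraticChar_one_iff_isSquare (mul_ne_zero ha hb)).mp this

private lemma det_ne_zero' {ℓ : ℕ} [Fact ℓ.Prime] (g : GL2 ℓ) : (mat g).det ≠ 0 := by
  have hu : IsUnit (mat g) := g.isUnit
  exact ((Matrix.isUnit_iff_isUnit_det _).mp hu).ne_zero

private lemma anti_key {ℓ : ℕ} [Fact ℓ.Prime] (hℓ : ℓ ≠ 2) (δ : ZMod ℓ) {g : GL2 ℓ}
    (hg : InNnsAnti δ g) (h : IsScalar g ∨ Irreducible (Matrix.charpoly (mat g))) :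
    ¬ IsSquare (-(mat g).det) := by
  have hdet0 : (mat g).det ≠ 0 := det_ne_zero' g
  rcases h with ⟨c, hc⟩ | hirr
  · exfalso
    have h00 : mat g 0 0 = c := by rw [hc]; simp
    have h11 : mat g 1 1 = c := by rw [hc]; simp
    have hcc : c = -c := by linear_combination hg.1 - h11 - h00
    have hc0 : c = 0 := by
      have : 2 * c = 0 := by linear_combination hcc
      rcases mul_eq_zero.mp this with h | h
      · exact absurd h (my_two_ne_zero hℓ)
      · exact h
    apply hdet0
    rw [hc, hc0]; simp
  · rintro ⟨s, hs⟩
    have htr : (mat g).trace = 0 := by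
      rw [Matrix.trace_fin_two, hg.1]; ring
    have hroot : ((mat g).charpoly).IsRoot s := by
      rw [charpoly_fin2', htr]
      simp only [Polynomial.IsRoot, Polynomial.eval_add, Polynomial.eval_sub,
        Polynomial.eval_mul, Polynomial.eval_pow, Polynomial.eval_X, Polynomial.eval_C,
        Polynomial.map_zero]
      linear_combination -hs
    have hdeg := Polynomial.degree_eq_one_of_irreducible_of_root hirr hroot
    have h1 : ((mat g).charpoly).natDegree = 1 := Polynomial.natDegree_eq_of_degree_eq_some hdeg
    have h2 : ((mat g).charpoly).natDegree = 2 := by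
      rw [Matrix.charpoly_natDegree_eq_dim]; simp
    omega

private lemma anti_mul {ℓ : ℕ} (δ : ZMod ℓ) {h g : GL2 ℓ}
    (hh : InNnsAnti δ h) (hg : InCns δ g) : InNnsAnti δ (h * g) := by
  obtain ⟨h1, h2⟩ := hh
  obtain ⟨g1, g2⟩ := hg
  have hmul : mat (h * g) = mat h * mat g := rfl
  constructor
  · rw [hmul]
    simp only [Matrix.mul_apply, Fin.sum_univ_two]
    linear_combination mat h 1 0 * g2 + mat h 1 1 * g1 + mat g 0 0 * h1 + mat g 1 0 * h2
  · rw [hmul]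
    simp only [Matrix.mul_apply, Fin.sum_univ_two]
    linear_combination mat h 0 0 * g2 + mat h 0 1 * g1 + δ * mat g 1 0 * h1 + mat g 0 0 * h2

/-- Let `G ≤ N_ns` be not contained in `C_ns`, with every element scalar or
of irreducible characteristic polynomial. Then (a) every element of `G ∩ C_ns` has square
determinant, and (b) if the determinant map `G → F_ℓˣ` is surjective then `ℓ ≡ 1 (mod 4)`. -/
theorem Nns_local_condition_det
    {ℓ : ℕ} [Fact ℓ.Prime] (hℓ : ℓ ≠ 2) (δ : ZMod ℓ) (hδ : ¬ IsSquare δ)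
    (G : Subgroup (GL2 ℓ)) (hG : ∀ g ∈ G, InNns δ g) (hnc : ∃ g ∈ G, ¬ InCns δ g)
    (hloc : ∀ g ∈ G, IsScalar g ∨ Irreducible (Matrix.charpoly (mat g))) :
    (∀ g ∈ G, InCns δ g → IsSquare ((mat g).det)) ∧
    ((∀ u : (ZMod ℓ)ˣ, ∃ g ∈ G, Matrix.GeneralLinearGroup.det g = u) → ℓ % 4 = 1) := by
  obtain ⟨h, hhG, hhnc⟩ := hnc
  have hh_anti : InNnsAnti δ h := (hG h hhG).resolve_left hhnc
  have key_h : ¬ IsSquare (-(mat h).det) := anti_key hℓ δ hh_anti (hloc h hhG)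
  have parta : ∀ g ∈ G, InCns δ g → IsSquare ((mat g).det) := by
    intro g hgG hgC
    have hmulmem : h * g ∈ G := mul_mem hhG hgG
    have key2 : ¬ IsSquare (-(mat (h * g)).det) :=
      anti_key hℓ δ (anti_mul δ hh_anti hgC) (hloc _ hmulmem)
    have hdm : (mat (h * g)).det = (mat h).det * (mat g).det := by
      have : mat (h * g) = mat h * mat g := rfl
      rw [this, Matrix.det_mul]
    by_contra hns
    apply key2
    rw [hdm]
    have : -((mat h).det * (mat g).det) = (-(mat h).det) * (mat g).det := by ring
    rw [this]
    exact nonsq_mul (neg_ne_zero.mpr (det_ne_zero' h)) (det_ne_zero' g) key_h hns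
  refine ⟨parta, ?_⟩
  intro hsurj
  have hδ0 : δ ≠ 0 := fun h0 => hδ (h0 ▸ ⟨0, by ring⟩)
  obtain ⟨g, hgG, hgdet⟩ := hsurj (Units.mk0 δ hδ0)
  have hdetg : (mat g).det = δ := by
    have := congrArg Units.val hgdet
    rw [Matrix.GeneralLinearGroup.val_det_apply] at this
    exact this
  have hneg1 : IsSquare (-1 : ZMod ℓ) := by
    rcases hG g hgG with hC | hA
    · exact absurd (hdetg ▸ parta g hgG hC) hδ
    · have hnsq : ¬ IsSquare (-δ) := by
        have := anti_key hℓ δ hA (hloc g hgG)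
        rwa [hdetg] at this
      obtain ⟨r, hr⟩ := nonsq_mul (neg_ne_zero.mpr hδ0) hδ0 hnsq hδ
      refine ⟨r * δ⁻¹, ?_⟩
      have hinv : δ * δ⁻¹ = 1 := mul_inv_cancel₀ hδ0
      field_simp
      linear_combination hr
  rw [ZMod.exists_sq_eq_neg_one_iff] at hneg1
  have hodd : ℓ % 2 = 1 := Nat.odd_iff.mp ((Fact.out : ℓ.Prime).odd_of_ne_two hℓ)
  omega
end

section
/- Let ℓ be an odd prime. Every element g ∈ N_ns \ C_ns (i.e. an invertible matrix of the form [[a, −δb],[b, −a]]) lies in a conjugate of N_sp, the normalizer of the split Cartan subgroup. -/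
open Matrix

/-- Every element of `N_ns \ C_ns` (matrices `[[a, -δb],[b, -a]]`) lies in
a conjugate of `N_sp`. -/
theorem NnsAnti_mem_conj_Nsp
    {ℓ : ℕ} [Fact ℓ.Prime] (hℓ : ℓ ≠ 2) (δ : ZMod ℓ) (hδ : ¬ IsSquare δ)
    (g : GL2 ℓ) (hg : InNnsAnti δ g) :
    ∃ x : GL2 ℓ, InNsp (x * g * x⁻¹) := by
  obtain ⟨h11, h01⟩ := hg
  set a := mat g 0 0 with ha
  set b := mat g 1 0 with hb0
  by_cases hb : b = 0
  · refine ⟨1, Or.inl ⟨?_, ?_⟩⟩ <;> simp only [one_mul, inv_one, mul_one]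
    · show mat g 0 1 = 0
      rw [h01, hb]; ring
    · show mat g 1 0 = 0
      rw [← hb0, hb]
  · set M : Matrix (Fin 2) (Fin 2) (ZMod ℓ) := !![1, a; 0, b] with hM
    set N : Matrix (Fin 2) (Fin 2) (ZMod ℓ) := !![1, -(a*b⁻¹); 0, b⁻¹] with hN
    have hbinv : b * b⁻¹ = 1 := mul_inv_cancel₀ hb
    have hbinv' : b⁻¹ * b = 1 := inv_mul_cancel₀ hb
    have hMN : M * N = 1 := by
      ext i j
      fin_cases i <;> fin_cases j <;>
        simp [hM, hN, Matrix.mul_apply, Fin.sum_univ_two] <;> (try field_simp)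
    have hNM : N * M = 1 := by
      ext i j
      fin_cases i <;> fin_cases j <;>
        simp [hM, hN, Matrix.mul_apply, Fin.sum_univ_two] <;> (try field_simp) <;> (try ring)
    let u : GL2 ℓ := ⟨M, N, hMN, hNM⟩
    have huinv : ((u⁻¹ : GL2 ℓ) : Matrix (Fin 2) (Fin 2) (ZMod ℓ)) = N := rfl
    refine ⟨u⁻¹, Or.inr ⟨?_, ?_⟩⟩ <;>
    · show mat (u⁻¹ * g * (u⁻¹)⁻¹) _ _ = 0
      rw [inv_inv]
      have hh : mat (u⁻¹ * g * u) = N * (mat g) * M := by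
        simp [mat, Units.val_mul, huinv]
        rfl
      rw [hh]
      simp [hM, hN, Matrix.mul_apply, Matrix.vecMul, dotProduct,
        Fin.sum_univ_two, h11, h01, ← ha, ← hb0]
      try field_simp
      try ring
end
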